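/- arXiv:1602.02854 — 7 statements merged into one kernel-verified Lean document; each statement's English description precedes it below -/
import Mathlib

section
/- Under the MLR assumption on the family of densities of T, for any parameter value θ and any 0 ≤ p ≤ p' ≤ 1, Pr_θ{P ≤ p | P ≤ p'} ≤ Pr_0{P ≤ p | P ≤ p'} = p/p', where P = F_0(T) if θ > 0 (and P = 1 − F_0(T) if θ < 0) is the one-sided p-value for a true null hypothesis. -/
open MeasureTheory Set Filter Topology
open scoped ENNReal

/-- Key MLR integral comparison: if `v y * u x ≤ u y * v x` for `x ∈ A`,
`y ∈ B \ A`, then `∫_B v · ∫_A u ≤ ∫_A v · ∫_B u`. -/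
lemma key_mlr_aux (u v : ℝ → ℝ≥0∞) (A B : Set ℝ)
    (hA : MeasurableSet A) (hB : MeasurableSet B) (hAB : A ⊆ B)
    (hu : ∀ x, u x ≠ ⊤) (hv : ∀ y, v y ≠ ⊤)
    (hUA : (∫⁻ x in A, u x) ≠ ⊤) (hVA : (∫⁻ x in A, v x) ≠ ⊤)
    (h : ∀ x ∈ A, ∀ y ∈ B \ A, v y * u x ≤ u y * v x) :
    (∫⁻ y in B, v y) * (∫⁻ x in A, u x) ≤ (∫⁻ x in A, v x) * (∫⁻ y in B, u y) := by
  have hsplit : ∀ w : ℝ → ℝ≥0∞,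
      (∫⁻ y in B, w y) = (∫⁻ y in A, w y) + ∫⁻ y in B \ A, w y := by
    intro w
    rw [← lintegral_union (hB.diff hA) disjoint_sdiff_self_right, union_diff_cancel hAB]
  rw [hsplit v, hsplit u, add_mul, mul_add]
  refine add_le_add le_rfl ?_
  calc (∫⁻ y in B \ A, v y) * (∫⁻ x in A, u x)
      = ∫⁻ y in B \ A, v y * (∫⁻ x in A, u x) := (lintegral_mul_const' _ _ hUA).symm
    _ ≤ ∫⁻ y in B \ A, u y * (∫⁻ x in A, v x) := by
        refine lintegral_mono_ae ?_
        filter_upwards [ae_restrict_mem (hB.diff hA)] with y hy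
        calc v y * (∫⁻ x in A, u x)
            = ∫⁻ x in A, v y * u x := (lintegral_const_mul' _ _ (hv y)).symm
          _ ≤ ∫⁻ x in A, u y * v x := by
              refine lintegral_mono_ae ?_
              filter_upwards [ae_restrict_mem hA] with x hx
              exact h x hx y hy
          _ = u y * (∫⁻ x in A, v x) := lintegral_const_mul' _ _ (hu y)
    _ = (∫⁻ x in A, v x) * (∫⁻ y in B \ A, u y) := by
        rw [lintegral_mul_const' _ _ hVA, mul_comm]

/-- Under the MLR assumption, for any θ and 0 ≤ p ≤ p' ≤ 1, the
conditional probability Pr_θ{P ≤ p | P ≤ p'} ≤ Pr_0{P ≤ p | P ≤ p'} = p/p',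
where P = F₀(T) if θ > 0 and P = 1 - F₀(T) if θ < 0 is the one-sided p-value.
The conditional inequality Pr{P ≤ p | P ≤ p'} ≤ p/p' is stated in the
equivalent product form p' · Pr_θ{P ≤ p} ≤ p · Pr_θ{P ≤ p'} (valid since
{P ≤ p} ⊆ {P ≤ p'}), and at θ = 0 we have Pr_0{P ≤ p} = p exactly. -/
theorem mlr_pvalue_conditional_dominance
    (μ : ℝ → Measure ℝ) (hprob : ∀ θ, IsProbabilityMeasure (μ θ))
    (f : ℝ → ℝ → ℝ) (hfpos : ∀ θ x, 0 < f θ x)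
    (hdens : ∀ θ, μ θ = volume.withDensity (fun x => ENNReal.ofReal (f θ x)))
    (F : ℝ → ℝ → ℝ)
    (hF : ∀ θ x, F θ x = (μ θ (Iic x)).toReal)
    (hmono : ∀ θ θ' x, θ ≤ θ' → F θ' x ≤ F θ x)
    (hcont : Continuous (F 0))
    (MLR : ∀ θ₀ θ₁ x₀ x₁, θ₀ < θ₁ → x₀ < x₁ →
      f θ₁ x₀ / f θ₀ x₀ ≤ f θ₁ x₁ / f θ₀ x₁)
    (θ p p' : ℝ) (hp0 : 0 ≤ p) (hpp' : p ≤ p') (hp'1 : p' ≤ 1) :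
    (0 < θ →
      ENNReal.ofReal p' * μ θ {t | F 0 t ≤ p} ≤
        ENNReal.ofReal p * μ θ {t | F 0 t ≤ p'}) ∧
    (θ < 0 →
      ENNReal.ofReal p' * μ θ {t | 1 - F 0 t ≤ p} ≤
        ENNReal.ofReal p * μ θ {t | 1 - F 0 t ≤ p'}) ∧
    μ 0 {t | F 0 t ≤ p} = ENNReal.ofReal p := by
  have hp'0 : (0:ℝ) ≤ p' := le_trans hp0 hpp'
  have hp1 : p ≤ 1 := le_trans hpp' hp'1
  have hfin : ∀ θ s, μ θ s ≠ ⊤ := fun θ s => by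
    haveI := hprob θ; exact measure_ne_top _ s
  have hμapp : ∀ θ (s : Set ℝ), MeasurableSet s →
      μ θ s = ∫⁻ t in s, ENNReal.ofReal (f θ t) := fun θ s hs => by
    rw [hdens θ, withDensity_apply _ hs]
  have hμuniv : ∀ θ, μ θ univ = 1 := fun θ => (hprob θ).measure_univ
  have hFmono : Monotone (F 0) := fun x y hxy => by
    rw [hF, hF]
    exact ENNReal.toReal_mono (hfin 0 _) (measure_mono (Iic_subset_Iic.2 hxy))
  have hofF : ∀ x, ENNReal.ofReal (F 0 x) = μ 0 (Iic x) := fun x => by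
    rw [hF]; exact ENNReal.ofReal_toReal (hfin 0 _)
  -- limits of F 0
  have htop : Tendsto (F 0) atTop (𝓝 1) := by
    have h1 : Tendsto (fun x => μ 0 (Iic x)) atTop (𝓝 (μ 0 univ)) :=
      tendsto_measure_Iic_atTop _
    have h2 := (ENNReal.tendsto_toReal (by rw [hμuniv 0]; exact ENNReal.one_ne_top)).comp h1
    have h3 : (μ 0 univ).toReal = 1 := by rw [hμuniv 0]; simp
    simp only [Function.comp_def] at h2
    rw [h3] at h2
    have hFeq : F 0 = fun x => (μ 0 (Iic x)).toReal := funext fun x => hF 0 x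
    rw [hFeq]
    exact h2
  have hbot : Tendsto (F 0) atBot (𝓝 0) := by
    have hempty : (⋂ n : ℝ, Iic n) = (∅ : Set ℝ) := by
      ext x
      simp only [mem_iInter, mem_Iic, mem_empty_iff_false, iff_false, not_forall, not_le]
      exact ⟨x - 1, by linarith⟩
    have h1 : Tendsto (fun x => μ 0 (Iic x)) atBot (𝓝 (μ 0 (⋂ n : ℝ, Iic n))) :=
      tendsto_measure_iInter_atBot (fun i => measurableSet_Iic.nullMeasurableSet)
        (fun a b hab => Iic_subset_Iic.2 hab) ⟨0, hfin 0 _⟩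
    rw [hempty] at h1
    have h2 := (ENNReal.tendsto_toReal (by simp : μ 0 (∅ : Set ℝ) ≠ ⊤)).comp h1
    simp only [Function.comp, measure_empty] at h2
    simp only [ENNReal.toReal_zero] at h2
    have hFeq : F 0 = fun x => (μ 0 (Iic x)).toReal := funext fun x => hF 0 x
    rw [hFeq]
    exact h2
  -- measure of lower sets
  have claimM : ∀ q : ℝ, 0 ≤ q → q ≤ 1 → μ 0 {t | F 0 t ≤ q} = ENNReal.ofReal q := by
    intro q hq0 hq1
    by_cases hne : {t | F 0 t ≤ q}.Nonempty
    · by_cases hbd : BddAbove {t | F 0 t ≤ q}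
      · have hSc : IsClosed {t | F 0 t ≤ q} := isClosed_le hcont continuous_const
        have haS : sSup {t | F 0 t ≤ q} ∈ {t | F 0 t ≤ q} := hSc.csSup_mem hne hbd
        set a := sSup {t | F 0 t ≤ q} with ha
        have hSIic : {t | F 0 t ≤ q} = Iic a := by
          refine Subset.antisymm (fun t ht => le_csSup hbd ht) (fun t ht => ?_)
          exact le_trans (hFmono ht) haS
        have hFa : F 0 a = q := by
          refine le_antisymm haS (le_of_not_gt fun hlt => ?_)
          obtain ⟨δ, hδ, hball⟩ := Metric.continuous_iff.1 hcont a (q - F 0 a) (by linarith)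
          have hd : dist (a + δ/2) a < δ := by
            rw [Real.dist_eq]; rw [abs_of_pos (by linarith)]; linarith
          have h2 : |F 0 (a + δ/2) - F 0 a| < q - F 0 a := by
            have := hball (a + δ/2) hd; rwa [Real.dist_eq] at this
          have hb : a + δ/2 ∈ {t | F 0 t ≤ q} := by
            have := (abs_lt.1 h2).2; simp only [mem_setOf_eq]; linarith
          have := le_csSup hbd hb; linarith
        rw [hSIic, ← hofF, hFa]
      · have hSuniv : {t | F 0 t ≤ q} = univ := by
          refine eq_univ_of_forall fun t => ?_
          obtain ⟨s, hsS, hts⟩ := not_bddAbove_iff.1 hbd t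
          exact le_trans (hFmono hts.le) hsS
        have hq : (1:ℝ) ≤ q := by
          by_contra hlt
          push_neg at hlt
          obtain ⟨c, hc⟩ := eventually_atTop.1 (htop.eventually (eventually_gt_nhds hlt))
          have hcS : F 0 c ≤ q := by
            have hc' : c ∈ {t | F 0 t ≤ q} := by rw [hSuniv]; trivial
            exact hc'
          exact absurd hcS (not_le.2 (hc c le_rfl))
        have hq1' : q = 1 := le_antisymm hq1 hq
        rw [hSuniv, hμuniv 0, hq1']
        simp
    · rw [not_nonempty_iff_eq_empty] at hne
      have hq : q ≤ 0 := by
        by_contra hlt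
        push_neg at hlt
        obtain ⟨c, hc⟩ := eventually_atBot.1 (hbot.eventually (eventually_lt_nhds hlt))
        have : c ∈ {t | F 0 t ≤ q} := (hc c le_rfl).le
        rw [hne] at this
        exact this
      have hq0' : q = 0 := le_antisymm hq hq0
      rw [hne, hq0']
      simp
  -- measure of upper sets (for the θ < 0 case)
  have claimM' : ∀ q : ℝ, 0 ≤ q → q ≤ 1 →
      μ 0 {t | 1 - F 0 t ≤ q} = ENNReal.ofReal q := by
    intro q hq0 hq1
    have hSeq : {t | 1 - F 0 t ≤ q} = {t | 1 - q ≤ F 0 t} := by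
      ext t; simp only [mem_setOf_eq]; constructor <;> intro h <;> linarith
    rw [hSeq]
    have hSc : IsClosed {t | 1 - q ≤ F 0 t} := isClosed_le continuous_const hcont
    by_cases hne : {t | 1 - q ≤ F 0 t}.Nonempty
    · by_cases hbd : BddBelow {t | 1 - q ≤ F 0 t}
      · have haS : sInf {t | 1 - q ≤ F 0 t} ∈ {t | 1 - q ≤ F 0 t} := hSc.csInf_mem hne hbd
        set a := sInf {t | 1 - q ≤ F 0 t} with ha
        have hSIci : {t | 1 - q ≤ F 0 t} = Ici a := by
          refine Subset.antisymm (fun t ht => csInf_le hbd ht) (fun t ht => ?_)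
          exact le_trans haS (hFmono ht)
        have hFa : F 0 a = 1 - q := by
          refine le_antisymm (le_of_not_gt fun hlt => ?_) haS
          obtain ⟨δ, hδ, hball⟩ := Metric.continuous_iff.1 hcont a (F 0 a - (1 - q)) (by linarith)
          have hd : dist (a - δ/2) a < δ := by
            rw [Real.dist_eq]; rw [abs_of_neg (by linarith)]; linarith
          have h2 : |F 0 (a - δ/2) - F 0 a| < F 0 a - (1 - q) := by
            have := hball (a - δ/2) hd; rwa [Real.dist_eq] at this
          have hb : a - δ/2 ∈ {t | 1 - q ≤ F 0 t} := by
            have := (abs_lt.1 h2).1; simp only [mem_setOf_eq]; linarith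
          have := csInf_le hbd hb; linarith
        have hsing : μ 0 ({a} : Set ℝ) = 0 := by
          rw [hμapp 0 {a} (measurableSet_singleton a)]
          have hr : volume.restrict ({a} : Set ℝ) = 0 :=
            Measure.restrict_eq_zero.2 (by simp)
          rw [Measure.restrict_eq_zero.2 (by simp : volume ({a} : Set ℝ) = 0)]
          exact lintegral_zero_measure _
        have hIio : μ 0 (Iio a) = ENNReal.ofReal (1 - q) := by
          have h1 : Iio a = Iic a \ {a} := by
            ext x; simp only [mem_Iio, mem_diff, mem_Iic, mem_singleton_iff]
            constructor
            · intro h; exact ⟨h.le, ne_of_lt h⟩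
            · intro h; exact lt_of_le_of_ne h.1 h.2
          rw [h1, measure_diff_null hsing, ← hofF, hFa]
        have hkey : ENNReal.ofReal (1 - q) + ENNReal.ofReal q = 1 := by
          rw [← ENNReal.ofReal_add (by linarith) hq0]
          norm_num
        rw [hSIci, ← compl_Iio, measure_compl measurableSet_Iio (hfin 0 _), hμuniv 0, hIio]
        rw [← hkey, ENNReal.add_sub_cancel_left ENNReal.ofReal_ne_top]
      · have hSuniv : {t | 1 - q ≤ F 0 t} = univ := by
          refine eq_univ_of_forall fun t => ?_
          obtain ⟨s, hsS, hst⟩ := not_bddBelow_iff.1 hbd t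
          exact le_trans hsS (hFmono hst.le)
        have hq : (1:ℝ) ≤ q := by
          by_contra hlt
          push_neg at hlt
          obtain ⟨c, hc⟩ :=
            eventually_atBot.1 (hbot.eventually (eventually_lt_nhds (by linarith : (0:ℝ) < 1 - q)))
          have hcS : 1 - q ≤ F 0 c := by
            have hc' : c ∈ {t | 1 - q ≤ F 0 t} := by rw [hSuniv]; trivial
            exact hc'
          have := hc c le_rfl
          linarith
        have hq1' : q = 1 := le_antisymm hq1 hq
        rw [hSuniv, hμuniv 0, hq1']
        simp
    · rw [not_nonempty_iff_eq_empty] at hne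
      have hq : q ≤ 0 := by
        by_contra hlt
        push_neg at hlt
        obtain ⟨c, hc⟩ :=
          eventually_atTop.1 (htop.eventually (eventually_gt_nhds (by linarith : 1 - q < 1)))
        have : c ∈ {t | 1 - q ≤ F 0 t} := (hc c le_rfl).le
        rw [hne] at this
        exact this
      have hq0' : q = 0 := le_antisymm hq hq0
      rw [hne, hq0']
      simp
  refine ⟨?_, ?_, claimM p hp0 hp1⟩
  · -- θ > 0
    intro hθ
    have hA : MeasurableSet {t | F 0 t ≤ p} :=
      (isClosed_le hcont continuous_const).measurableSet
    have hB : MeasurableSet {t | F 0 t ≤ p'} :=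
      (isClosed_le hcont continuous_const).measurableSet
    have hAB : {t | F 0 t ≤ p} ⊆ {t | F 0 t ≤ p'} := fun t ht => le_trans ht hpp'
    rw [← claimM p hp0 hp1, ← claimM p' hp'0 hp'1,
      hμapp 0 _ hA, hμapp 0 _ hB, hμapp θ _ hA, hμapp θ _ hB]
    refine key_mlr_aux (fun x => ENNReal.ofReal (f θ x)) (fun x => ENNReal.ofReal (f 0 x))
      _ _ hA hB hAB (fun x => ENNReal.ofReal_ne_top) (fun y => ENNReal.ofReal_ne_top)
      (by rw [← hμapp θ _ hA]; exact hfin θ _) (by rw [← hμapp 0 _ hA]; exact hfin 0 _) ?_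
    intro x hx y hy
    have hxy : x < y := by
      by_contra hle
      push_neg at hle
      exact hy.2 (le_trans (hFmono hle) hx)
    have hm := MLR 0 θ x y hθ hxy
    rw [div_le_div_iff₀ (hfpos 0 x) (hfpos 0 y)] at hm
    rw [← ENNReal.ofReal_mul (hfpos 0 y).le, ← ENNReal.ofReal_mul (hfpos θ y).le]
    refine ENNReal.ofReal_le_ofReal ?_
    nlinarith [hm]
  · -- θ < 0
    intro hθ
    have hA : MeasurableSet {t | 1 - F 0 t ≤ p} := by
      have : IsClosed {t | 1 - F 0 t ≤ p} :=
        isClosed_le (continuous_const.sub hcont) continuous_const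
      exact this.measurableSet
    have hB : MeasurableSet {t | 1 - F 0 t ≤ p'} := by
      have : IsClosed {t | 1 - F 0 t ≤ p'} :=
        isClosed_le (continuous_const.sub hcont) continuous_const
      exact this.measurableSet
    have hAB : {t | 1 - F 0 t ≤ p} ⊆ {t | 1 - F 0 t ≤ p'} := fun t ht => le_trans ht hpp'
    rw [← claimM' p hp0 hp1, ← claimM' p' hp'0 hp'1,
      hμapp 0 _ hA, hμapp 0 _ hB, hμapp θ _ hA, hμapp θ _ hB]
    refine key_mlr_aux (fun x => ENNReal.ofReal (f θ x)) (fun x => ENNReal.ofReal (f 0 x))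
      _ _ hA hB hAB (fun x => ENNReal.ofReal_ne_top) (fun y => ENNReal.ofReal_ne_top)
      (by rw [← hμapp θ _ hA]; exact hfin θ _) (by rw [← hμapp 0 _ hA]; exact hfin 0 _) ?_
    intro x hx y hy
    have hyx : y < x := by
      by_contra hle
      push_neg at hle
      have : 1 - F 0 y ≤ 1 - F 0 x := by
        have hmxy := hFmono hle; linarith
      exact hy.2 (le_trans this hx)
    have hm := MLR θ 0 y x hθ hyx
    rw [div_le_div_iff₀ (hfpos θ y) (hfpos θ x)] at hm
    rw [← ENNReal.ofReal_mul (hfpos 0 y).le, ← ENNReal.ofReal_mul (hfpos θ y).le]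
    refine ENNReal.ofReal_le_ofReal ?_
    nlinarith [hm]
end

section
/- The two-stage procedure (Procedure 1: first reject all hypotheses among H₁,...,H_{2n} with p-value ≤ α/n; if r hypotheses are rejected at stage 1 with r < n, then reject remaining hypotheses with p-value ≤ α/(n−r)) satisfies FWER(θ) ≤ α/(1 − α/n) for every parameter vector θ, under assumptions A.1, A.2, A.3. -/
open MeasureTheory Finset
open scoped Classical

/-- The two-stage Procedure 1 (stage 1: reject hypotheses among the
2n one-sided hypotheses whose p-value is ≤ α/n; if r < n are rejected, stage 2:
reject remaining hypotheses with p-value ≤ α/(n−r)) has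
FWER(θ) ≤ α/(1 − α/n) under assumptions A.1, A.2, A.3.  The n true nulls have
p-values P i, the n false nulls have p-values 1 − P i. -/
theorem two_stage_procedure_fwer_bound
    {Ω : Type*} [MeasurableSpace Ω] (μ : Measure Ω) [IsProbabilityMeasure μ]
    (n : ℕ) (hn : 1 ≤ n) (α : ℝ) (hα : 0 < α) (hα1 : α < 1)
    (θ : Fin n → ℝ) (P : Fin n → Ω → ℝ)
    (hmeas : ∀ i, Measurable (P i))
    -- A.1: true null p-values are stochastically larger than U(0,1) ...
    (hA1 : ∀ i, ∀ p : ℝ, 0 ≤ p → p ≤ 1 →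
      μ {ω | P i ω ≤ p} ≤ ENNReal.ofReal p)
    -- ... with equality (exact uniformity) when θᵢ = 0
    (hA1eq : ∀ i, θ i = 0 → ∀ p : ℝ, 0 ≤ p → p ≤ 1 →
      μ {ω | P i ω ≤ p} = ENNReal.ofReal p)
    -- A.2: Pr{Pᵢ ≤ p | Pᵢ ≤ p'} ≤ p/p', stated in product form
    (hA2 : ∀ i, ∀ p p' : ℝ, 0 ≤ p → p ≤ p' → p' ≤ 1 →
      ENNReal.ofReal p' * μ {ω | P i ω ≤ p} ≤
        ENNReal.ofReal p * μ {ω | P i ω ≤ p'})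
    -- A.3: the statistics (hence the pairs of p-values) are mutually independent
    (hA3 : ProbabilityTheory.iIndepFun P μ)
    -- the full family of 2n p-values: true nulls inl, false nulls inr
    (pval : (Fin n ⊕ Fin n) → Ω → ℝ)
    (hpvalT : ∀ i, pval (Sum.inl i) = P i)
    (hpvalF : ∀ i ω, pval (Sum.inr i) ω = 1 - P i ω)
    -- r = number of rejections at stage 1
    (r : Ω → ℕ)
    (hr : ∀ ω, r ω = (Finset.univ.filter
      (fun j : Fin n ⊕ Fin n => pval j ω ≤ α / (n : ℝ))).card) :
    μ {ω | ∃ i : Fin n, P i ω ≤ α / (n : ℝ) ∨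
        (r ω < n ∧ P i ω ≤ α / ((n - r ω : ℕ) : ℝ))} ≤
      ENNReal.ofReal (α / (1 - α / (n : ℝ))) := by
  have hn1 : (1 : ℝ) ≤ (n : ℝ) := by exact_mod_cast hn
  have hn0 : (0 : ℝ) < (n : ℝ) := by linarith
  have hαn1 : α / (n : ℝ) < 1 := by
    rw [div_lt_one hn0]; linarith
  set β : ℝ := 1 - α / (n : ℝ) with hβdef
  have hβpos : 0 < β := by simp only [hβdef]; linarith
  have hβ1 : β ≤ 1 := by
    have : 0 < α / (n : ℝ) := div_pos hα hn0
    simp only [hβdef]; linarith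
  by_cases hreg : β ≤ α
  · refine le_trans prob_le_one ?_
    rw [ENNReal.one_le_ofReal]
    exact (one_le_div hβpos).2 hreg
  push_neg at hreg
  -- now α < β
  have hαnα : α / (n : ℝ) ≤ α := div_le_self hα.le hn1
  -- threshold function
  set c : ℕ → ℝ := fun k => α / ((n - k : ℕ) : ℝ) with hcdef
  have hc_facts : ∀ k, k < n → 0 ≤ c k ∧ c k ≤ α ∧ α / (n : ℝ) ≤ c k := by
    intro k hk
    have h1 : 1 ≤ n - k := by omega
    have h1' : (1 : ℝ) ≤ ((n - k : ℕ) : ℝ) := by exact_mod_cast h1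
    have h0' : (0 : ℝ) < ((n - k : ℕ) : ℝ) := by linarith
    have hle : ((n - k : ℕ) : ℝ) ≤ (n : ℝ) := by
      exact_mod_cast Nat.sub_le n k
    refine ⟨by positivity, div_le_self hα.le h1', ?_⟩
    exact div_le_div_of_nonneg_left hα.le h0' hle
  -- key consequence of A.2 via a limit p' ↑ β
  have key2 : ∀ (i : Fin n) (cv : ℝ), 0 ≤ cv → cv < β →
      μ {ω | P i ω ≤ cv} ≤ ENNReal.ofReal (cv / β) * μ (P i ⁻¹' Set.Iio β) := by
    intro i cv hcv0 hcvβ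
    set x := (μ {ω | P i ω ≤ cv}).toReal with hxdef
    set y := (μ (P i ⁻¹' Set.Iio β)).toReal with hydef
    have hxy : ∀ t, cv ≤ t → t < β → t * x ≤ cv * y := by
      intro t hct htβ
      have h2 := hA2 i cv t hcv0 hct (le_trans htβ.le hβ1)
      have hmono : μ {ω | P i ω ≤ t} ≤ μ (P i ⁻¹' Set.Iio β) :=
        measure_mono (fun ω hω => lt_of_le_of_lt hω htβ)
      have h3 : ENNReal.ofReal t * μ {ω | P i ω ≤ cv} ≤
          ENNReal.ofReal cv * μ (P i ⁻¹' Set.Iio β) :=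
        h2.trans (mul_le_mul_right hmono _)
      have hfin : ENNReal.ofReal cv * μ (P i ⁻¹' Set.Iio β) ≠ ⊤ :=
        ENNReal.mul_ne_top ENNReal.ofReal_ne_top (measure_ne_top μ _)
      have h4 := ENNReal.toReal_mono hfin h3
      rwa [ENNReal.toReal_mul, ENNReal.toReal_mul, ENNReal.toReal_ofReal (hcv0.trans hct),
        ENNReal.toReal_ofReal hcv0] at h4
    have hlim : β * x ≤ cv * y := by
      have htend : Filter.Tendsto (fun t : ℝ => t * x)
          (nhdsWithin β (Set.Iio β)) (nhds (β * x)) :=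
        ((continuous_id.mul continuous_const).tendsto β).mono_left nhdsWithin_le_nhds
      refine le_of_tendsto htend ?_
      filter_upwards [Ico_mem_nhdsLT hcvβ] with t ht
      exact hxy t ht.1 ht.2
    have hx : μ {ω | P i ω ≤ cv} = ENNReal.ofReal x :=
      (ENNReal.ofReal_toReal (measure_ne_top μ _)).symm
    have hy : μ (P i ⁻¹' Set.Iio β) = ENNReal.ofReal y :=
      (ENNReal.ofReal_toReal (measure_ne_top μ _)).symm
    rw [hx, hy, ← ENNReal.ofReal_mul (by positivity)]
    apply ENNReal.ofReal_le_ofReal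
    have hy0 : 0 ≤ y := ENNReal.toReal_nonneg
    have : x ≤ (cv * y) / β := by
      rw [le_div_iff₀ hβpos]; linarith [hlim]
    calc x ≤ (cv * y) / β := this
      _ = cv / β * y := by ring
  -- product formula from independence
  have hprod : ∀ sets : Fin n → Set ℝ, (∀ j, MeasurableSet (sets j)) →
      μ (⋂ j, P j ⁻¹' sets j) = ∏ j, μ (P j ⁻¹' sets j) := by
    intro sets hsets
    have h := hA3.measure_inter_preimage_eq_mul Finset.univ (sets := sets)
      (fun j _ => hsets j)
    simpa using h
  -- atoms
  set S : Bool → Set ℝ := fun t => if t then Set.Ici β else Set.Iio β with hSdef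
  have hSmeas : ∀ t, MeasurableSet (S t) := by
    intro t; cases t
    · simpa [hSdef] using measurableSet_Iio
    · simpa [hSdef] using measurableSet_Ici
  set A : (Fin n → Bool) → Set Ω := fun b => ⋂ j, P j ⁻¹' S (b j) with hAdef
  set kb : (Fin n → Bool) → ℕ := fun b => (univ.filter fun j => b j = true).card
    with hkbdef
  have hkb_le : ∀ b, kb b ≤ n := by
    intro b
    simpa [hkbdef] using Finset.card_filter_le univ (fun j => b j = true)
  have hkb_lt : ∀ (b : Fin n → Bool) (i : Fin n), b i = false → kb b < n := by
    intro b i hbi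
    have hss : (univ.filter fun j => b j = true) ⊂ univ := by
      rw [Finset.ssubset_univ_iff]
      intro h
      have hi : i ∈ univ.filter fun j => b j = true := by
        rw [h]; exact mem_univ i
      rw [Finset.mem_filter] at hi
      simp [hbi] at hi
    calc kb b < univ.card := Finset.card_lt_card hss
      _ = n := by simp
  -- the inclusion of the FWER event into the atom-union
  have hincl : {ω | ∃ i : Fin n, P i ω ≤ α / (n : ℝ) ∨
      (r ω < n ∧ P i ω ≤ α / ((n - r ω : ℕ) : ℝ))} ⊆
      ⋃ i : Fin n, ⋃ b ∈ univ.filter (fun b : Fin n → Bool => b i = false),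
        (A b ∩ {ω | P i ω ≤ c (kb b)}) := by
    intro ω hω
    obtain ⟨i, hi⟩ := hω
    set bf : Fin n → Bool := fun j => decide (β ≤ P j ω) with hbfdef
    have hbf_true : ∀ j, bf j = true ↔ β ≤ P j ω := by
      intro j; simp [hbfdef]
    have hbf_false : ∀ j, bf j = false ↔ P j ω < β := by
      intro j; simp [hbfdef]
    have hωA : ω ∈ A bf := by
      simp only [hAdef, Set.mem_iInter, Set.mem_preimage]
      intro j
      by_cases h : β ≤ P j ω
      · have : bf j = true := (hbf_true j).2 h
        rw [this]; simpa [hSdef] using h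
      · have : bf j = false := (hbf_false j).2 (not_le.1 h)
        rw [this]; simpa [hSdef] using not_le.1 h
    -- find a good witness
    have hwitness : ∃ i' : Fin n, bf i' = false ∧ P i' ω ≤ c (kb bf) := by
      by_cases hT : ∃ j, P j ω ≤ α / (n : ℝ)
      · obtain ⟨j, hj⟩ := hT
        have hjf : bf j = false := by
          rw [hbf_false]
          calc P j ω ≤ α / (n : ℝ) := hj
            _ ≤ α := hαnα
            _ < β := hreg
        have hklt := hkb_lt bf j hjf
        exact ⟨j, hjf, hj.trans (hc_facts (kb bf) hklt).2.2⟩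
      · push_neg at hT
        rcases hi with hi1 | ⟨hrn, hi2⟩
        · exact absurd hi1 (not_le.2 (hT i))
        · -- r ω = kb bf
          have hrk : r ω = kb bf := by
            rw [hr ω]
            refine (Finset.card_bij
              (fun (j : Fin n) (_ : j ∈ univ.filter fun j => bf j = true) =>
                (Sum.inr j : Fin n ⊕ Fin n)) ?_ ?_ ?_).symm
            · intro j hj
              rw [Finset.mem_filter] at hj ⊢
              refine ⟨mem_univ _, ?_⟩
              rw [hpvalF]
              have hβle : β ≤ P j ω := (hbf_true j).1 hj.2
              simp only [hβdef] at hβle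
              linarith
            · intro a _ b _ hab
              exact Sum.inr.inj hab
            · intro h hh
              rw [Finset.mem_filter] at hh
              cases h with
              | inl j =>
                exfalso
                rw [hpvalT] at hh
                exact absurd hh.2 (not_le.2 (hT j))
              | inr j =>
                refine ⟨j, ?_, rfl⟩
                rw [Finset.mem_filter]
                refine ⟨mem_univ _, (hbf_true j).2 ?_⟩
                rw [hpvalF] at hh
                simp only [hβdef]
                linarith [hh.2]
          have hclt : c (r ω) ≤ α := by
            rw [hrk] at hrn ⊢
            exact (hc_facts (kb bf) hrn).2.1
          have hif : bf i = false := by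
            rw [hbf_false]
            have : P i ω ≤ c (r ω) := hi2
            calc P i ω ≤ c (r ω) := this
              _ ≤ α := hclt
              _ < β := hreg
          refine ⟨i, hif, ?_⟩
          rw [← hrk]; exact hi2
    obtain ⟨i', hi'f, hi'le⟩ := hwitness
    refine Set.mem_iUnion.2 ⟨i', ?_⟩
    exact Set.mem_biUnion (Finset.mem_filter.2 ⟨Finset.mem_univ _, hi'f⟩) ⟨hωA, hi'le⟩
  -- per-term bound using independence and key2
  have hterm : ∀ (i : Fin n) (b : Fin n → Bool), b i = false →
      μ (A b ∩ {ω | P i ω ≤ c (kb b)}) ≤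
        ENNReal.ofReal (c (kb b) / β) * μ (A b) := by
    intro i b hbi
    have hklt := hkb_lt b i hbi
    obtain ⟨hc0, hcα, -⟩ := hc_facts (kb b) hklt
    have hcβ : c (kb b) < β := lt_of_le_of_lt hcα hreg
    set sets' : Fin n → Set ℝ := fun j =>
      if j = i then Set.Iic (c (kb b)) else S (b j) with hs'def
    have hs'meas : ∀ j, MeasurableSet (sets' j) := by
      intro j
      by_cases h : j = i
      · simp only [hs'def, if_pos h]; exact measurableSet_Iic
      · simp only [hs'def, if_neg h]; exact hSmeas _
    have hSfalse : S false = Set.Iio β := by simp [hSdef]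
    have hAeq : A b ∩ {ω | P i ω ≤ c (kb b)} = ⋂ j, P j ⁻¹' sets' j := by
      ext ω
      simp only [hAdef, Set.mem_inter_iff, Set.mem_iInter, Set.mem_preimage,
        Set.mem_setOf_eq]
      constructor
      · rintro ⟨hall, hle⟩ j
        by_cases hji : j = i
        · subst hji; simp [hs'def, Set.mem_Iic, hle]
        · simp only [hs'def, if_neg hji]; exact hall j
      · intro hall
        refine ⟨fun j => ?_, ?_⟩
        · by_cases hji : j = i
          · subst hji
            have h1 := hall j
            simp only [hs'def, if_pos rfl, Set.mem_Iic] at h1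
            rw [hbi, hSfalse]
            exact Set.mem_Iio.2 (lt_of_le_of_lt h1 hcβ)
          · have h1 := hall j
            simpa only [hs'def, if_neg hji] using h1
        · have h1 := hall i
          simpa only [hs'def, if_pos rfl, Set.mem_Iic] using h1
    have hμA : μ (A b) = ∏ j, μ (P j ⁻¹' S (b j)) := by
      rw [hAdef]; exact hprod _ (fun j => hSmeas _)
    rw [hAeq, hprod sets' hs'meas,
      ← Finset.mul_prod_erase univ _ (Finset.mem_univ i)]
    have hsi : sets' i = Set.Iic (c (kb b)) := by simp [hs'def]
    have hrest : ∏ j ∈ univ.erase i, μ (P j ⁻¹' sets' j)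
        = ∏ j ∈ univ.erase i, μ (P j ⁻¹' S (b j)) := by
      refine Finset.prod_congr rfl fun j hj => ?_
      rw [Finset.mem_erase] at hj
      rw [hs'def]; simp [hj.1]
    rw [hsi, hrest]
    have hpre : P i ⁻¹' Set.Iic (c (kb b)) = {ω | P i ω ≤ c (kb b)} := rfl
    have hkey := key2 i (c (kb b)) hc0 hcβ
    calc μ (P i ⁻¹' Set.Iic (c (kb b))) * ∏ j ∈ univ.erase i, μ (P j ⁻¹' S (b j))
        ≤ (ENNReal.ofReal (c (kb b) / β) * μ (P i ⁻¹' Set.Iio β)) *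
            ∏ j ∈ univ.erase i, μ (P j ⁻¹' S (b j)) := by
          rw [hpre]; exact mul_le_mul_left hkey _
      _ = ENNReal.ofReal (c (kb b) / β) *
            (μ (P i ⁻¹' S (b i)) * ∏ j ∈ univ.erase i, μ (P j ⁻¹' S (b j))) := by
          rw [hbi, hSfalse, mul_assoc]
      _ = ENNReal.ofReal (c (kb b) / β) * μ (A b) := by
          rw [Finset.mul_prod_erase univ (fun j => μ (P j ⁻¹' S (b j)))
            (Finset.mem_univ i), hμA]
  -- counting lemma
  have hcard : ∀ b : Fin n → Bool,
      (univ.filter fun i => b i = false).card = n - kb b := by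
    intro b
    have h := Finset.card_filter_add_card_filter_not
      (s := univ) (p := fun i : Fin n => b i = true)
    have he : (univ.filter fun i : Fin n => ¬ (b i = true))
        = univ.filter fun i => b i = false := by
      apply Finset.filter_congr
      intro i _
      simp [Bool.not_eq_true]
    rw [he] at h
    have hcu : (univ : Finset (Fin n)).card = n := by simp
    rw [hcu] at h
    have hkbb : kb b = (univ.filter fun i : Fin n => b i = true).card := rfl
    omega
  have hbound : ∀ b : Fin n → Bool, ((univ.filter fun i => b i = false).card) •
      (ENNReal.ofReal (c (kb b) / β) * μ (A b)) ≤ ENNReal.ofReal (α / β) * μ (A b) := by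
    intro b
    rw [hcard b]
    by_cases hkn : kb b = n
    · simp [hkn]
    · have hklt : kb b < n := lt_of_le_of_ne (hkb_le b) hkn
      have hm1 : 1 ≤ n - kb b := by omega
      have hm0 : (0:ℝ) < ((n - kb b : ℕ) : ℝ) := by
        have : (1:ℝ) ≤ ((n - kb b : ℕ) : ℝ) := by exact_mod_cast hm1
        linarith
      rw [nsmul_eq_mul, ← mul_assoc]
      apply mul_le_mul_left
      rw [← ENNReal.ofReal_natCast, ← ENNReal.ofReal_mul (by positivity)]
      apply ENNReal.ofReal_le_ofReal
      rw [hcdef]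
      have hne : ((n - kb b : ℕ) : ℝ) ≠ 0 := hm0.ne'
      field_simp
      exact le_rfl
  -- disjointness of atoms
  have hAdisj : (↑(univ : Finset (Fin n → Bool)) :
      Set (Fin n → Bool)).PairwiseDisjoint A := by
    intro b _ b' _ hne
    obtain ⟨j, hj⟩ := Function.ne_iff.1 hne
    have hdS : Disjoint (S (b j)) (S (b' j)) := by
      have hj' : b j = !(b' j) := Bool.eq_not_of_ne hj
      cases hb' : b' j
      · rw [hb'] at hj'
        simp only [Bool.not_false] at hj'
        rw [hj']
        simpa [hSdef] using (Set.Iio_disjoint_Ici (le_refl β)).symm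
      · rw [hb'] at hj'
        simp only [Bool.not_true] at hj'
        rw [hj']
        simpa [hSdef] using (Set.Iio_disjoint_Ici (le_refl β))
    have hsub1 : A b ⊆ P j ⁻¹' S (b j) := by
      rw [hAdef]; exact Set.iInter_subset _ j
    have hsub2 : A b' ⊆ P j ⁻¹' S (b' j) := by
      rw [hAdef]; exact Set.iInter_subset _ j
    exact Set.disjoint_of_subset hsub1 hsub2 (hdS.preimage _)
  have hAmeas : ∀ b : Fin n → Bool, MeasurableSet (A b) := by
    intro b
    rw [hAdef]
    exact MeasurableSet.iInter fun j => hmeas j (hSmeas _)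
  have hAsum : ∑ b : Fin n → Bool, μ (A b) ≤ 1 := by
    rw [← measure_biUnion_finset hAdisj (fun b _ => hAmeas b)]
    exact prob_le_one
  -- final chain
  calc μ {ω | ∃ i : Fin n, P i ω ≤ α / (n : ℝ) ∨
        (r ω < n ∧ P i ω ≤ α / ((n - r ω : ℕ) : ℝ))}
      ≤ μ (⋃ i : Fin n, ⋃ b ∈ univ.filter (fun b : Fin n → Bool => b i = false),
          (A b ∩ {ω | P i ω ≤ c (kb b)})) := measure_mono hincl
    _ ≤ ∑' i : Fin n, μ (⋃ b ∈ univ.filter (fun b : Fin n → Bool => b i = false),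
          (A b ∩ {ω | P i ω ≤ c (kb b)})) := measure_iUnion_le _
    _ = ∑ i : Fin n, μ (⋃ b ∈ univ.filter (fun b : Fin n → Bool => b i = false),
          (A b ∩ {ω | P i ω ≤ c (kb b)})) := tsum_fintype _
    _ ≤ ∑ i : Fin n, ∑ b ∈ univ.filter (fun b : Fin n → Bool => b i = false),
          μ (A b ∩ {ω | P i ω ≤ c (kb b)}) :=
        Finset.sum_le_sum fun i _ => measure_biUnion_finset_le _ _
    _ ≤ ∑ i : Fin n, ∑ b ∈ univ.filter (fun b : Fin n → Bool => b i = false),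
          ENNReal.ofReal (c (kb b) / β) * μ (A b) :=
        Finset.sum_le_sum fun i _ => Finset.sum_le_sum fun b hb =>
          hterm i b (Finset.mem_filter.1 hb).2
    _ = ∑ i : Fin n, ∑ b : Fin n → Bool,
          if b i = false then ENNReal.ofReal (c (kb b) / β) * μ (A b) else 0 :=
        Finset.sum_congr rfl fun i _ => Finset.sum_filter _ _
    _ = ∑ b : Fin n → Bool, ∑ i : Fin n,
          if b i = false then ENNReal.ofReal (c (kb b) / β) * μ (A b) else 0 :=
        Finset.sum_comm
    _ = ∑ b : Fin n → Bool, ((univ.filter fun i => b i = false).card) •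
          (ENNReal.ofReal (c (kb b) / β) * μ (A b)) :=
        Finset.sum_congr rfl fun b _ => by
          rw [← Finset.sum_filter, Finset.sum_const]
    _ ≤ ∑ b : Fin n → Bool, ENNReal.ofReal (α / β) * μ (A b) :=
        Finset.sum_le_sum fun b _ => hbound b
    _ = ENNReal.ofReal (α / β) * ∑ b : Fin n → Bool, μ (A b) :=
        (Finset.mul_sum _ _ _).symm
    _ ≤ ENNReal.ofReal (α / β) * 1 := mul_le_mul_right hAsum _
    _ = ENNReal.ofReal (α / β) := mul_one _
end

section
/- Under independence with all θ_i → 0 (all true null p-values i.i.d. U(0,1) and P_{n+i} = 1 − P_i), the FWER of the two-stage Procedure 1 equals Σ_{r=0}^{n−1} C(n,r) (α/n)^r [ (1 − α/n)^{n−r} − (1 − α/n − α/(n−r))^{n−r} ]. -/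
open MeasureTheory Finset
open scoped Classical

lemma meas_pt_zero {Ω : Type*} [MeasurableSpace Ω] (μ : Measure Ω) [IsProbabilityMeasure μ]
    (X : Ω → ℝ) (hX : Measurable X)
    (hcdf : ∀ p : ℝ, 0 ≤ p → p ≤ 1 → μ {ω | X ω ≤ p} = ENNReal.ofReal p)
    {c : ℝ} (h0 : 0 ≤ c) (h1 : c ≤ 1) : μ {ω | X ω = c} = 0 := by
  rcases eq_or_lt_of_le h0 with h | h
  · have hsub : {ω | X ω = c} ⊆ {ω | X ω ≤ 0} := by
      intro ω hω; simp only [Set.mem_setOf_eq] at *; rw [hω, ← h]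
    have h2 := (measure_mono hsub).trans_eq (hcdf 0 le_rfl zero_le_one)
    simpa using h2
  · refine le_antisymm ?_ zero_le
    refine ENNReal.le_of_forall_pos_le_add fun ε hε _ => ?_
    rw [zero_add]
    set δ : ℝ := max (c - ε) 0 with hδdef
    have hδ0 : (0:ℝ) ≤ δ := le_max_right _ _
    have hεR : (0:ℝ) < ε := hε
    have hδc : δ < c := max_lt (by linarith) h
    have hδ1 : δ ≤ 1 := le_trans (le_of_lt hδc) h1
    have hsub : {ω | X ω = c} ⊆ {ω | X ω ≤ c} \ {ω | X ω ≤ δ} := by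
      intro ω hω
      simp only [Set.mem_setOf_eq] at hω
      exact ⟨le_of_eq hω, by simp only [Set.mem_setOf_eq]; linarith⟩
    have hmono : {ω | X ω ≤ δ} ⊆ {ω | X ω ≤ c} := fun ω hω => le_trans hω (le_of_lt hδc)
    have hdiff : μ ({ω | X ω ≤ c} \ {ω | X ω ≤ δ}) = ENNReal.ofReal c - ENNReal.ofReal δ := by
      rw [measure_diff hmono ((hX measurableSet_Iic).nullMeasurableSet) (measure_ne_top μ _),
        hcdf c h0 h1, hcdf δ hδ0 hδ1]
    calc μ {ω | X ω = c} ≤ μ ({ω | X ω ≤ c} \ {ω | X ω ≤ δ}) := measure_mono hsub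
      _ = ENNReal.ofReal c - ENNReal.ofReal δ := hdiff
      _ = ENNReal.ofReal (c - δ) := (ENNReal.ofReal_sub c hδ0).symm
      _ ≤ ENNReal.ofReal ε := ENNReal.ofReal_le_ofReal (by rw [hδdef]; rcases le_max_iff.mpr (Or.inl (le_refl (c-ε))) with _; rcases max_cases (c - (ε:ℝ)) 0 with ⟨h',_⟩|⟨h',_⟩ <;> rw [h'] <;> linarith)
      _ = (ε : ENNReal) := ENNReal.ofReal_coe_nnreal

lemma meas_Ioi {Ω : Type*} [MeasurableSpace Ω] (μ : Measure Ω) [IsProbabilityMeasure μ]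
    (X : Ω → ℝ) (hX : Measurable X)
    (hcdf : ∀ p : ℝ, 0 ≤ p → p ≤ 1 → μ {ω | X ω ≤ p} = ENNReal.ofReal p)
    {c : ℝ} (h0 : 0 ≤ c) (h1 : c ≤ 1) : μ {ω | c < X ω} = ENNReal.ofReal (1 - c) := by
  have h : {ω | c < X ω} = {ω | X ω ≤ c}ᶜ := by ext ω; simp
  rw [h, prob_compl_eq_one_sub (show MeasurableSet {ω | X ω ≤ c} from hX measurableSet_Iic), hcdf c h0 h1,
    ENNReal.ofReal_sub 1 h0, ENNReal.ofReal_one]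

lemma meas_Ioo {Ω : Type*} [MeasurableSpace Ω] (μ : Measure Ω) [IsProbabilityMeasure μ]
    (X : Ω → ℝ) (hX : Measurable X)
    (hcdf : ∀ p : ℝ, 0 ≤ p → p ≤ 1 → μ {ω | X ω ≤ p} = ENNReal.ofReal p)
    {b c : ℝ} (h0 : 0 ≤ b) (hbc : b ≤ c) (h1 : c ≤ 1) :
    μ {ω | b < X ω ∧ X ω < c} = ENNReal.ofReal (c - b) := by
  have hc0 : 0 ≤ c := le_trans h0 hbc
  have hb1 : b ≤ 1 := le_trans hbc h1
  have h2 : {ω | b < X ω ∧ X ω ≤ c} = {ω | X ω ≤ c} \ {ω | X ω ≤ b} := by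
    ext ω; simp only [Set.mem_setOf_eq, Set.mem_diff, not_le]; tauto
  have h3 : μ {ω | b < X ω ∧ X ω ≤ c} = ENNReal.ofReal (c - b) := by
    rw [h2, measure_diff (show {ω | X ω ≤ b} ⊆ {ω | X ω ≤ c} from fun ω hω => le_trans hω hbc)
      ((show MeasurableSet {ω | X ω ≤ b} from hX measurableSet_Iic).nullMeasurableSet) (measure_ne_top μ _),
      hcdf c hc0 h1, hcdf b h0 hb1, ← ENNReal.ofReal_sub c h0]
  have h4 : {ω | b < X ω ∧ X ω < c} = {ω | b < X ω ∧ X ω ≤ c} \ {ω | X ω = c} := by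
    ext ω; simp only [Set.mem_setOf_eq, Set.mem_diff]
    constructor
    · rintro ⟨hb, hc⟩; exact ⟨⟨hb, le_of_lt hc⟩, ne_of_lt hc⟩
    · rintro ⟨⟨hb, hc⟩, hne⟩; exact ⟨hb, lt_of_le_of_ne hc hne⟩
  rw [h4, measure_diff_null (meas_pt_zero μ X hX hcdf hc0 h1), h3]

/-- Under independence with all θᵢ = 0 (true null p-values i.i.d.
U(0,1), false null p-values 1 − Pᵢ), the FWER of the two-stage Procedure 1
equals Σ_{r=0}^{n−1} C(n,r) (α/n)^r [(1−α/n)^{n−r} − (1−α/n−α/(n−r))^{n−r}]. -/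
theorem two_stage_procedure_fwer_exact_uniform
    {Ω : Type*} [MeasurableSpace Ω] (μ : Measure Ω) [IsProbabilityMeasure μ]
    (n : ℕ) (hn : 1 ≤ n) (α : ℝ) (hα : 0 < α) (hα1 : α < 1)
    (hαsmall : α + α / (n : ℝ) ≤ 1)
    (P : Fin n → Ω → ℝ)
    (hmeas : ∀ i, Measurable (P i))
    -- each true null p-value is exactly U(0,1)
    (hunif : ∀ i, ∀ p : ℝ, 0 ≤ p → p ≤ 1 →
      μ {ω | P i ω ≤ p} = ENNReal.ofReal p)
    -- independence
    (hindep : ProbabilityTheory.iIndepFun P μ)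
    -- the full family of 2n p-values: true nulls inl, false nulls inr
    (pval : (Fin n ⊕ Fin n) → Ω → ℝ)
    (hpvalT : ∀ i, pval (Sum.inl i) = P i)
    (hpvalF : ∀ i ω, pval (Sum.inr i) ω = 1 - P i ω)
    (r : Ω → ℕ)
    (hr : ∀ ω, r ω = (Finset.univ.filter
      (fun j : Fin n ⊕ Fin n => pval j ω ≤ α / (n : ℝ))).card) :
    μ {ω | ∃ i : Fin n, P i ω ≤ α / (n : ℝ) ∨
        (r ω < n ∧ P i ω ≤ α / ((n - r ω : ℕ) : ℝ))} =
      ENNReal.ofReal (∑ k ∈ Finset.range n, (n.choose k : ℝ) * (α / n) ^ k *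
        ((1 - α / n) ^ (n - k) - (1 - α / n - α / ((n - k : ℕ) : ℝ)) ^ (n - k))) := by
  have hnR : (0:ℝ) < n := by exact_mod_cast hn
  set a : ℝ := α / n with ha_def
  set b : ℕ → ℝ := fun k => α / ((n - k : ℕ) : ℝ) with hb_def
  have ha_pos : 0 < a := div_pos hα hnR
  have haα : a ≤ α := by
    rw [ha_def]
    exact div_le_self hα.le (by exact_mod_cast hn)
  have hαa : α ≤ 1 - a := by linarith [hαsmall]
  have h2a : a ≤ 1 - a := le_trans haα hαa
  have ha1 : a ≤ 1 := by linarith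
  have hb_nonneg : ∀ k, 0 ≤ b k := fun k => div_nonneg hα.le (Nat.cast_nonneg _)
  have hb_le : ∀ k, k < n → b k ≤ α := by
    intro k hk
    apply div_le_self hα.le
    have : 1 ≤ n - k := Nat.le_sub_of_add_le (by omega)
    exact_mod_cast this
  have ha_le_b : ∀ k, k < n → a ≤ b k := by
    intro k hk
    apply div_le_div_of_nonneg_left hα.le
    · have : 1 ≤ n - k := by omega
      exact_mod_cast this
    · exact_mod_cast Nat.sub_le n k
  have hb_n : b n = 0 := by simp [hb_def]
  have hbase : ∀ k, k ≤ n → 0 ≤ 1 - a - b k := by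
    intro k hk
    rcases eq_or_lt_of_le hk with h | h
    · rw [h, hb_n]; linarith
    · have := hb_le k h; linarith
  -- the events
  set B : Finset (Fin n) → Fin n → Set ℝ := fun S i =>
    if i ∈ S then Set.Ioi (1 - a) else Set.Ioo (b S.card) (1 - a) with hB_def
  set A : Finset (Fin n) → Set Ω := fun S => ⋂ i, P i ⁻¹' (B S i) with hA_def
  have hA_mem : ∀ S ω, ω ∈ A S ↔
      (∀ i ∈ S, 1 - a < P i ω) ∧ ∀ i ∉ S, b S.card < P i ω ∧ P i ω < 1 - a := by
    intro S ω
    rw [hA_def]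
    simp only [Set.mem_iInter, Set.mem_preimage, hB_def]
    constructor
    · intro h
      refine ⟨fun i hi => ?_, fun i hi => ?_⟩
      · simpa [hi] using h i
      · simpa [hi] using h i
    · intro ⟨h1, h2⟩ i
      by_cases hi : i ∈ S
      · simpa [hi] using h1 i hi
      · simpa [hi] using h2 i hi
  have hAmeas : ∀ S, MeasurableSet (A S) := by
    intro S
    apply MeasurableSet.iInter
    intro i
    apply (hmeas i)
    simp only [hB_def]
    split_ifs
    · exact measurableSet_Ioi
    · exact measurableSet_Ioo
  -- measure of each A S
  have hAμ : ∀ S : Finset (Fin n), μ (A S) =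
      ENNReal.ofReal (a ^ S.card * (1 - a - b S.card) ^ (n - S.card)) := by
    intro S
    have hkn' : ∀ i, i ∉ S → S.card < n := by
      intro i hi
      have hssub : S ⊂ Finset.univ := Finset.ssubset_univ_iff.mpr
        (fun h => hi (by rw [h]; exact Finset.mem_univ i))
      have := Finset.card_lt_card hssub
      simpa using this
    have hprod : μ (A S) = ∏ i, μ (P i ⁻¹' B S i) := by
      rw [hA_def]
      refine hindep.meas_iInter fun i => ⟨B S i, ?_, rfl⟩
      simp only [hB_def]
      split_ifs
      · exact measurableSet_Ioi
      · exact measurableSet_Ioo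
    have hBi : ∀ i, μ (P i ⁻¹' B S i)
        = if i ∈ S then ENNReal.ofReal a else ENNReal.ofReal (1 - a - b S.card) := by
      intro i
      simp only [hB_def]
      by_cases hi : i ∈ S
      · rw [if_pos hi, if_pos hi]
        have h1 : P i ⁻¹' Set.Ioi (1 - a) = {ω | 1 - a < P i ω} := rfl
        rw [h1, meas_Ioi μ (P i) (hmeas i) (hunif i) (by linarith) (by linarith),
          show (1:ℝ) - (1 - a) = a by ring]
      · rw [if_neg hi, if_neg hi]
        have hk : S.card < n := hkn' i hi
        have h1 : P i ⁻¹' Set.Ioo (b S.card) (1 - a) = {ω | b S.card < P i ω ∧ P i ω < 1 - a} := rfl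
        rw [h1, meas_Ioo μ (P i) (hmeas i) (hunif i) (hb_nonneg _)
          (by linarith [hb_le _ hk]) (by linarith),
          show (1:ℝ) - a - b S.card = 1 - a - b S.card by ring]
    have hcle : S.card ≤ n := by simpa using Finset.card_le_univ S
    rw [hprod, Finset.prod_congr rfl (fun i _ => hBi i), Finset.prod_ite,
      Finset.prod_const, Finset.prod_const]
    have hmemS : Finset.univ.filter (fun i => i ∈ S) = S := by ext i; simp
    have hnotS : (Finset.univ.filter (fun i => ¬ i ∈ S)).card = n - S.card := by
      have h1 : Finset.univ.filter (fun i => ¬ i ∈ S) = Finset.univ \ S := by ext i; simp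
      rw [h1, Finset.card_sdiff_of_subset (Finset.subset_univ S)]
      simp
    rw [hmemS, hnotS, ← ENNReal.ofReal_pow ha_pos.le, ← ENNReal.ofReal_pow (hbase _ hcle),
      ← ENNReal.ofReal_mul (pow_nonneg ha_pos.le _)]
  -- disjointness
  have hdisj : Pairwise (Function.onFun Disjoint A) := by
    intro S T hST
    rw [Function.onFun, Set.disjoint_left]
    intro ω hS hT
    rw [hA_mem] at hS hT
    have hex : ∃ i, (i ∈ S ∧ i ∉ T) ∨ (i ∈ T ∧ i ∉ S) := by
      by_contra h
      push_neg at h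
      exact hST (Finset.ext fun i => by have := h i; tauto)
    obtain ⟨i, ⟨h1, h2⟩ | ⟨h1, h2⟩⟩ := hex
    · have := hS.1 i h1
      have := hT.2 i h2
      linarith [this.2]
    · have := hT.1 i h1
      have := hS.2 i h2
      linarith [this.2]
  -- r computation
  have hcard : ∀ ω, (∀ i, a < P i ω) →
      r ω = (Finset.univ.filter (fun i => 1 - a ≤ P i ω)).card := by
    intro ω hω
    rw [hr ω, ← Finset.card_toLeft_add_card_toRight]
    have hL : (Finset.univ.filter (fun j : Fin n ⊕ Fin n => pval j ω ≤ a)).toLeft = ∅ := by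
      ext i
      simp only [Finset.mem_toLeft, Finset.mem_filter, Finset.mem_univ, true_and,
        Finset.notMem_empty, iff_false]
      rw [hpvalT i]
      exact not_le.mpr (hω i)
    have hR : (Finset.univ.filter (fun j : Fin n ⊕ Fin n => pval j ω ≤ a)).toRight
        = Finset.univ.filter (fun i => 1 - a ≤ P i ω) := by
      ext i
      simp only [Finset.mem_toRight, Finset.mem_filter, Finset.mem_univ, true_and]
      rw [hpvalF i ω]
      constructor <;> intro h <;> linarith
    rw [hL, hR]
    simp
  -- A S avoids E
  have hAE : ∀ S ω, ω ∈ A S →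
      ¬ (∃ i : Fin n, P i ω ≤ a ∨ (r ω < n ∧ P i ω ≤ b (r ω))) := by
    intro S ω hA
    rw [hA_mem] at hA
    obtain ⟨h1, h2⟩ := hA
    have hkn : ∀ i, i ∉ S → S.card < n := by
      intro i hi
      have hssub : S ⊂ Finset.univ := Finset.ssubset_univ_iff.mpr
        (fun h => hi (by rw [h]; exact Finset.mem_univ i))
      have := Finset.card_lt_card hssub
      simpa using this
    have hgt : ∀ i, a < P i ω := by
      intro i
      by_cases hi : i ∈ S
      · exact lt_of_le_of_lt h2a (h1 i hi)
      · exact lt_of_le_of_lt (ha_le_b _ (hkn i hi)) (h2 i hi).1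
    have hfilter : Finset.univ.filter (fun i => 1 - a ≤ P i ω) = S := by
      ext i
      simp only [Finset.mem_filter, Finset.mem_univ, true_and]
      constructor
      · intro h
        by_contra hi
        linarith [(h2 i hi).2]
      · intro hi
        exact le_of_lt (h1 i hi)
    have hrω : r ω = S.card := by rw [hcard ω hgt, hfilter]
    rintro ⟨i, hle | ⟨hlt, hle⟩⟩
    · exact absurd hle (not_le.mpr (hgt i))
    · rw [hrω] at hlt hle
      by_cases hi : i ∈ S
      · have := h1 i hi
        have hbk := hb_le _ hlt
        linarith
      · linarith [(h2 i hi).1]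
  -- complement direction
  have hEA : ∀ ω, (∀ i, P i ω ≠ 1 - a) →
      ¬ (∃ i : Fin n, P i ω ≤ a ∨ (r ω < n ∧ P i ω ≤ b (r ω))) → ∃ S, ω ∈ A S := by
    intro ω hne hnE
    push_neg at hnE
    refine ⟨Finset.univ.filter (fun i => 1 - a < P i ω), ?_⟩
    rw [hA_mem]
    have hfS : Finset.univ.filter (fun i => 1 - a ≤ P i ω)
        = Finset.univ.filter (fun i => 1 - a < P i ω) := by
      ext i
      simp only [Finset.mem_filter, Finset.mem_univ, true_and]
      constructor
      · intro h
        exact lt_of_le_of_ne h (Ne.symm (hne i))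
      · exact le_of_lt
    have hrω : r ω = (Finset.univ.filter (fun i => 1 - a < P i ω)).card := by
      rw [hcard ω (fun i => (hnE i).1), hfS]
    constructor
    · intro i hi
      exact (Finset.mem_filter.mp hi).2
    · intro i hi
      have hilt : P i ω < 1 - a := by
        have h' : ¬ (1 - a < P i ω) := fun h => hi (Finset.mem_filter.mpr ⟨Finset.mem_univ i, h⟩)
        exact lt_of_le_of_ne (not_lt.mp h') (hne i)
      have hkn : (Finset.univ.filter (fun i => 1 - a < P i ω)).card < n := by
        have hssub : (Finset.univ.filter (fun i => 1 - a < P i ω)) ⊂ Finset.univ :=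
          Finset.ssubset_univ_iff.mpr (fun h => hi (by rw [h]; exact Finset.mem_univ i))
        have := Finset.card_lt_card hssub
        simpa using this
      refine ⟨?_, hilt⟩
      have := (hnE i).2 (by rw [hrω]; exact hkn)
      rwa [hrω] at this
  -- null set
  have hN : μ (⋃ i, {ω | P i ω = 1 - a}) = 0 := by
    refine measure_iUnion_null fun i => meas_pt_zero μ (P i) (hmeas i) (hunif i) ?_ ?_
    · linarith
    · linarith
  -- a.e. equality
  have hae : ({ω | ∃ i : Fin n, P i ω ≤ a ∨ (r ω < n ∧ P i ω ≤ b (r ω))} : Set Ω)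
      =ᵐ[μ] ((⋃ S : Finset (Fin n), A S)ᶜ : Set Ω) := by
    rw [Filter.eventuallyEq_set]
    have h0 : ∀ᵐ ω ∂μ, ω ∉ ⋃ i, {ω | P i ω = 1 - a} :=
      measure_eq_zero_iff_ae_notMem.mp hN
    filter_upwards [h0] with ω hω
    have hne : ∀ i, P i ω ≠ 1 - a := by
      intro i hi
      exact hω (Set.mem_iUnion.mpr ⟨i, hi⟩)
    constructor
    · intro hE hU
      obtain ⟨S, hS⟩ := Set.mem_iUnion.mp hU
      exact hAE S ω hS hE
    · intro hU
      by_contra hE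
      exact hU (Set.mem_iUnion.mpr (hEA ω hne (by exact hE)))
  -- final computation
  have hT_nonneg : (0:ℝ) ≤ ∑ S : Finset (Fin n), a ^ S.card * (1 - a - b S.card) ^ (n - S.card) :=
    Finset.sum_nonneg fun S _ => mul_nonneg (pow_nonneg ha_pos.le _)
      (pow_nonneg (hbase _ (by simpa using Finset.card_le_univ S)) _)
  have hU : μ (⋃ S : Finset (Fin n), A S)
      = ENNReal.ofReal (∑ S : Finset (Fin n), a ^ S.card * (1 - a - b S.card) ^ (n - S.card)) := by
    rw [measure_iUnion hdisj hAmeas, tsum_fintype,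
      ENNReal.ofReal_sum_of_nonneg (fun S _ => mul_nonneg (pow_nonneg ha_pos.le _)
        (pow_nonneg (hbase _ (by simpa using Finset.card_le_univ S)) _))]
    exact Finset.sum_congr rfl fun S _ => hAμ S
  have hT1 : (∑ S : Finset (Fin n), a ^ S.card * (1 - a - b S.card) ^ (n - S.card))
      = ∑ m ∈ Finset.range (n + 1), (n.choose m : ℝ) * (a ^ m * (1 - a - b m) ^ (n - m)) := by
    have h := Finset.sum_powerset_apply_card
      (fun k => a ^ k * (1 - a - b k) ^ (n - k)) (x := (Finset.univ : Finset (Fin n)))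
    simp only [Finset.powerset_univ, Finset.card_univ, Fintype.card_fin, nsmul_eq_mul] at h
    exact h
  have hb1 : (∑ m ∈ Finset.range (n + 1), (n.choose m : ℝ) * (a ^ m * (1 - a) ^ (n - m))) = 1 := by
    have h := add_pow a (1 - a) n
    rw [show a + (1 - a) = (1:ℝ) by ring, one_pow] at h
    calc (∑ m ∈ Finset.range (n + 1), (n.choose m : ℝ) * (a ^ m * (1 - a) ^ (n - m)))
        = ∑ m ∈ Finset.range (n + 1), a ^ m * (1 - a) ^ (n - m) * (n.choose m : ℝ) :=
          Finset.sum_congr rfl fun k _ => by ring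
      _ = 1 := h.symm
  have hreal : 1 - (∑ S : Finset (Fin n), a ^ S.card * (1 - a - b S.card) ^ (n - S.card))
      = ∑ k ∈ Finset.range n, (n.choose k : ℝ) * a ^ k *
        ((1 - a) ^ (n - k) - (1 - a - b k) ^ (n - k)) := by
    rw [hT1, Finset.sum_range_succ]
    have hlast : (n.choose n : ℝ) * (a ^ n * (1 - a - b n) ^ (n - n)) = a ^ n := by
      simp [hb_n]
    rw [hlast]
    have hb2 : (∑ k ∈ Finset.range n, (n.choose k : ℝ) * (a ^ k * (1 - a) ^ (n - k)))
        = 1 - a ^ n := by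
      have h2 := hb1
      rw [Finset.sum_range_succ] at h2
      have hl2 : (n.choose n : ℝ) * (a ^ n * (1 - a) ^ (n - n)) = a ^ n := by simp
      rw [hl2] at h2
      linarith
    calc 1 - (∑ k ∈ Finset.range n, (n.choose k:ℝ) * (a^k * (1-a-b k)^(n-k)) + a^n)
        = (∑ k ∈ Finset.range n, (n.choose k:ℝ) * (a^k*(1-a)^(n-k)))
          - ∑ k ∈ Finset.range n, (n.choose k:ℝ) * (a^k * (1-a-b k)^(n-k)) := by
          rw [hb2]; ring
      _ = ∑ k ∈ Finset.range n, ((n.choose k:ℝ) * (a^k*(1-a)^(n-k))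
            - (n.choose k:ℝ)*(a^k*(1-a-b k)^(n-k))) := (Finset.sum_sub_distrib _ _).symm
      _ = ∑ k ∈ Finset.range n, (n.choose k:ℝ) * a^k * ((1-a)^(n-k) - (1-a-b k)^(n-k)) :=
          Finset.sum_congr rfl fun k _ => by ring
  show μ {ω | ∃ i : Fin n, P i ω ≤ a ∨ (r ω < n ∧ P i ω ≤ b (r ω))} = _
  rw [measure_congr hae, prob_compl_eq_one_sub (MeasurableSet.iUnion hAmeas), hU,
    ← ENNReal.ofReal_one, ← ENNReal.ofReal_sub 1 hT_nonneg, hreal]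
end

section
/- The stepdown procedure with critical values α_i = α/(n − i + 1 + α), i = 1,...,n, applied to the 2n one-sided p-values P₁,...,P_{2n} (with P_{n+i} = 1 − P_i), strongly controls the FWER at level α under assumptions A.1, A.2, A.3: for every parameter vector θ, Pr_θ(at least one true null rejected) ≤ α. -/
open MeasureTheory Finset
open scoped Classical ENNReal NNReal

namespace HolmStepdownAux

lemma sup_le_of (m : ℕ) (f : ℕ → ℕ) (hf : ∀ k, f k ≤ k) :
    (Finset.range (m+1)).sup f ≤ m := by
  refine Finset.sup_le fun b hb => ?_
  rw [Finset.mem_range] at hb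
  exact le_trans (hf b) (by omega)

lemma sup_spec_of (m : ℕ) (C : ℕ → Prop) (f : ℕ → ℕ) (hC0 : C 0)
    (hfC : ∀ k, f k ≠ 0 → C k ∧ f k = k) :
    C ((Finset.range (m+1)).sup f) := by
  obtain ⟨b, _, hEq⟩ := Finset.exists_mem_eq_sup (Finset.range (m+1)) ⟨0, by simp⟩ f
  rw [hEq]
  by_cases h : f b = 0
  · rw [h]; exact hC0
  · obtain ⟨hC, hfb⟩ := hfC b h
    rw [hfb]; exact hC

lemma count_le (m : ℕ) (C : ℕ → Prop) [DecidablePred C] :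
    ((Finset.Icc 1 m).filter C).card ≤ m := by
  refine le_trans (Finset.card_filter_le _ _) ?_
  simp [Nat.card_Icc]

lemma count_ge (m k : ℕ) (C : ℕ → Prop) [DecidablePred C]
    (hdc : ∀ j j', j ≤ j' → C j' → C j) (hk : k ≤ m) (hCk : C k) :
    k ≤ ((Finset.Icc 1 m).filter C).card := by
  have hsub : Finset.Icc 1 k ⊆ (Finset.Icc 1 m).filter C := by
    intro j hj
    rw [Finset.mem_Icc] at hj
    rw [Finset.mem_filter, Finset.mem_Icc]
    exact ⟨⟨hj.1, le_trans hj.2 hk⟩, hdc j k hj.2 hCk⟩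
  calc k = (Finset.Icc 1 k).card := by simp [Nat.card_Icc]
  _ ≤ _ := Finset.card_le_card hsub

lemma count_spec (m : ℕ) (C : ℕ → Prop) [DecidablePred C] (hC0 : C 0)
    (hdc : ∀ j j', j ≤ j' → C j' → C j) :
    C (((Finset.Icc 1 m).filter C).card) := by
  set N := ((Finset.Icc 1 m).filter C).card with hN
  rcases Nat.eq_zero_or_pos N with h0 | hpos
  · rw [h0]; exact hC0
  · by_contra hNC
    have hsub : (Finset.Icc 1 m).filter C ⊆ Finset.Icc 1 (N - 1) := by
      intro x hx
      rw [Finset.mem_filter, Finset.mem_Icc] at hx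
      rw [Finset.mem_Icc]
      refine ⟨hx.1.1, ?_⟩
      by_contra hxN
      exact hNC (hdc N x (by omega) hx.2)
    have hle := Finset.card_le_card hsub
    rw [← hN] at hle
    simp [Nat.card_Icc] at hle
    omega

lemma card_filter_sum_type {a b : Type*} [Fintype a] [Fintype b]
    (q : a ⊕ b → Prop) [DecidablePred q] :
    (Finset.univ.filter q).card
      = (Finset.univ.filter (fun x : a => q (Sum.inl x))).card
        + (Finset.univ.filter (fun x : b => q (Sum.inr x))).card := by
  rw [← Finset.card_toLeft_add_card_toRight]
  have hL : (Finset.univ.filter q).toLeft = Finset.univ.filter (fun x : a => q (Sum.inl x)) := by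
    ext x; simp
  have hR : (Finset.univ.filter q).toRight = Finset.univ.filter (fun x : b => q (Sum.inr x)) := by
    ext x; simp
  rw [hL, hR]

lemma aux_limit {x y : ℝ≥0∞} (hx : x ≤ 1) (c : ℝ) (hc : 0 < c) (hc2 : c < 1/2)
    (h : ∀ p' : ℝ, c ≤ p' → p' < 1 - c →
      ENNReal.ofReal p' * x ≤ ENNReal.ofReal c * y) :
    ENNReal.ofReal (1 - c) * x ≤ ENNReal.ofReal c * y := by
  refine ENNReal.le_of_forall_pos_le_add (fun ε hε _ => ?_)
  set δ : ℝ := min (ε : ℝ) ((1 - 2*c)/2) with hδdef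
  have hδpos : 0 < δ := lt_min (by exact_mod_cast hε) (by linarith)
  have hδle : δ ≤ (1 - 2*c)/2 := min_le_right _ _
  have hp1 : c ≤ 1 - c - δ := by linarith
  have hp2 : 1 - c - δ < 1 - c := by linarith
  have h1 : ENNReal.ofReal (1-c) * x
      ≤ ENNReal.ofReal (1-c-δ) * x + ENNReal.ofReal δ * x := by
    rw [← add_mul, ← ENNReal.ofReal_add (by linarith) (le_of_lt hδpos)]
    have harg : (1-c-δ) + δ = 1-c := by ring
    rw [harg]
  have h2 : ENNReal.ofReal δ * x ≤ (ε : ℝ≥0∞) := by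
    calc ENNReal.ofReal δ * x ≤ ENNReal.ofReal δ * 1 := mul_le_mul_right hx _
    _ = ENNReal.ofReal δ := mul_one _
    _ ≤ ENNReal.ofReal (ε : ℝ) := ENNReal.ofReal_le_ofReal (min_le_left _ _)
    _ = (ε : ℝ≥0∞) := ENNReal.ofReal_coe_nnreal
  exact le_trans h1 (add_le_add (h _ hp1 hp2) h2)

noncomputable def LSet (n : ℕ) (crit : ℕ → ℝ) (i : Fin n) (j : ℕ)
    (v : Fin n → ℝ) : Finset (Fin n) :=
  (Finset.univ.erase i).filter (fun i' => 1 - crit j ≤ v i')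

def CondV (n : ℕ) (crit : ℕ → ℝ) (i : Fin n) (k : ℕ) (v : Fin n → ℝ) : Prop :=
  ∀ j ∈ Finset.Icc 1 k, j ≤ (LSet n crit i j v).card

noncomputable def KV (n : ℕ) (crit : ℕ → ℝ) (i : Fin n) (v : Fin n → ℝ) : ℕ :=
  ((Finset.Icc 1 (n-1)).filter (fun k => CondV n crit i k v)).card

lemma condV_zero (n : ℕ) (crit : ℕ → ℝ) (i : Fin n) (v : Fin n → ℝ) :
    CondV n crit i 0 v := by
  intro j hj
  simp at hj

lemma condV_dc (n : ℕ) (crit : ℕ → ℝ) (i : Fin n) (v : Fin n → ℝ) :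
    ∀ j j', j ≤ j' → CondV n crit i j' v → CondV n crit i j v := by
  intro j j' hle h j'' hj''
  rw [Finset.mem_Icc] at hj''
  exact h j'' (Finset.mem_Icc.2 ⟨hj''.1, le_trans hj''.2 hle⟩)

lemma KV_le (n : ℕ) (crit : ℕ → ℝ) (i : Fin n) (v : Fin n → ℝ) :
    KV n crit i v ≤ n - 1 :=
  count_le _ _

lemma KV_spec (n : ℕ) (crit : ℕ → ℝ) (i : Fin n) (v : Fin n → ℝ) :
    CondV n crit i (KV n crit i v) v :=
  count_spec _ _ (condV_zero n crit i v) (condV_dc n crit i v)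

lemma KV_ge (n : ℕ) (crit : ℕ → ℝ) (i : Fin n) (v : Fin n → ℝ) (k : ℕ)
    (hk : k ≤ n - 1) (h : CondV n crit i k v) : k ≤ KV n crit i v :=
  count_ge _ _ _ (condV_dc n crit i v) hk h

lemma KV_congr (n : ℕ) (crit : ℕ → ℝ) (i : Fin n) (v w : Fin n → ℝ)
    (hvw : ∀ i', i' ≠ i → v i' = w i') : KV n crit i v = KV n crit i w := by
  unfold KV
  congr 1
  apply Finset.filter_congr
  intro k _
  have hls : ∀ j, LSet n crit i j v = LSet n crit i j w := by
    intro j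
    unfold LSet
    apply Finset.filter_congr
    intro i' hi'
    rw [hvw i' (Finset.ne_of_mem_erase hi')]
  constructor <;> intro h j hj
  · rw [← hls j]; exact h j hj
  · rw [hls j]; exact h j hj

lemma KV_measurable (n : ℕ) (crit : ℕ → ℝ) (i : Fin n) :
    Measurable (KV n crit i) := by
  have hcard : ∀ j : ℕ, Measurable (fun v : Fin n → ℝ => (LSet n crit i j v).card) := by
    intro j
    have heq : (fun v : Fin n → ℝ => (LSet n crit i j v).card)
        = fun v => ∑ i' ∈ Finset.univ.erase i, if 1 - crit j ≤ v i' then 1 else 0 := by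
      funext v
      exact Finset.card_filter _ _
    rw [heq]
    apply Finset.measurable_sum
    intro i' _
    exact Measurable.ite
      (measurableSet_le measurable_const (measurable_pi_apply i'))
      measurable_const measurable_const
  have heq : KV n crit i
      = fun v => ∑ k ∈ Finset.Icc 1 (n-1), if CondV n crit i k v then 1 else 0 := by
    funext v
    exact Finset.card_filter _ _
  rw [heq]
  apply Finset.measurable_sum
  intro k _
  refine Measurable.ite ?_ measurable_const measurable_const
  have hset : {v : Fin n → ℝ | CondV n crit i k v}
      = ⋂ j ∈ Finset.Icc 1 k, {v | j ≤ (LSet n crit i j v).card} := by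
    ext v
    simp [CondV]
  rw [hset]
  refine Set.Finite.measurableSet_biInter (Finset.finite_toSet _) (fun j _ => ?_)
  have : {v : Fin n → ℝ | j ≤ (LSet n crit i j v).card}
      = (fun v => (LSet n crit i j v).card) ⁻¹' {m | j ≤ m} := rfl
  rw [this]
  exact (hcard j) (Set.to_countable _).measurableSet

lemma KV_indep {Ω : Type*} [MeasurableSpace Ω] (μ : Measure Ω) {n : ℕ}
    (crit : ℕ → ℝ) (P : Fin n → Ω → ℝ) (hmeas : ∀ i, Measurable (P i))
    (hA3 : ProbabilityTheory.iIndepFun P μ) (i : Fin n)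
    (k : ℕ) (A : Set ℝ) (hA : MeasurableSet A) :
    μ ({ω | KV n crit i (fun i' => P i' ω) = k} ∩ {ω | P i ω ∈ A})
      = μ {ω | KV n crit i (fun i' => P i' ω) = k} * μ {ω | P i ω ∈ A} := by
  have hdisj : Disjoint (Finset.univ.erase i) ({i} : Finset (Fin n)) := by
    simp
  have hIF := hA3.indepFun_finset (Finset.univ.erase i) ({i} : Finset (Fin n)) hdisj hmeas
  set S : Finset (Fin n) := Finset.univ.erase i with hS
  set e : ({j // j ∈ S} → ℝ) → (Fin n → ℝ) :=
    fun x i'' => if h : i'' ∈ S then x ⟨i'', h⟩ else 0 with he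
  have hemeas : Measurable e := by
    apply measurable_pi_lambda
    intro i''
    by_cases h : i'' ∈ S
    · simp only [he, dif_pos h]
      exact measurable_pi_apply _
    · simp only [he, dif_neg h]
      exact measurable_const
  have hφ : Measurable (fun x : {j // j ∈ S} → ℝ => KV n crit i (e x)) :=
    (KV_measurable n crit i).comp hemeas
  have hψ : Measurable (fun x : {j // j ∈ ({i} : Finset (Fin n))} → ℝ =>
      x ⟨i, Finset.mem_singleton_self i⟩) := measurable_pi_apply _
  have hcomp := hIF.comp hφ hψ
  have h1 : ((fun x : {j // j ∈ S} → ℝ => KV n crit i (e x))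
        ∘ (fun a (j : {j // j ∈ S}) => P j a))
      = (fun ω => KV n crit i (fun i' => P i' ω)) := by
    funext ω
    apply KV_congr
    intro i' hi'
    have hm : i' ∈ S := by
      rw [hS]
      exact Finset.mem_erase.2 ⟨hi', Finset.mem_univ _⟩
    simp only [Function.comp, he, dif_pos hm]
  have h2 : ((fun x : {j // j ∈ ({i} : Finset (Fin n))} → ℝ =>
        x ⟨i, Finset.mem_singleton_self i⟩)
        ∘ (fun a (j : {j // j ∈ ({i} : Finset (Fin n))}) => P j a)) = P i := rfl
  rw [h1, h2] at hcomp
  have hmul := ProbabilityTheory.indepFun_iff_measure_inter_preimage_eq_mul.mp hcomp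
    {k} A (measurableSet_singleton k) hA
  exact hmul

end HolmStepdownAux

open HolmStepdownAux

/-- The stepdown procedure with critical values
αᵢ = α/(n − i + 1 + α), i = 1,…,n, applied to the 2n one-sided p-values
(true nulls Pᵢ, false nulls 1 − Pᵢ) strongly controls the FWER at level α
under assumptions A.1, A.2, A.3.  The stepdown procedure rejects the i* smallest
p-values, where i* = max{i : P₍ⱼ₎ ≤ αⱼ ∀ j ≤ i}; equivalently (using
#{k : P_k ≤ αⱼ} ≥ j for all j ≤ i), a hypothesis is rejected iff i* ≥ 1 and its
p-value is ≤ α_{i*}. -/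
theorem holm_type_stepdown_fwer_control
    {Ω : Type*} [MeasurableSpace Ω] (μ : Measure Ω) [IsProbabilityMeasure μ]
    (n : ℕ) (hn : 1 ≤ n) (α : ℝ) (hα : 0 < α) (hα1 : α < 1)
    (θ : Fin n → ℝ) (P : Fin n → Ω → ℝ)
    (hmeas : ∀ i, Measurable (P i))
    (hA1 : ∀ i, ∀ p : ℝ, 0 ≤ p → p ≤ 1 →
      μ {ω | P i ω ≤ p} ≤ ENNReal.ofReal p)
    (hA1eq : ∀ i, θ i = 0 → ∀ p : ℝ, 0 ≤ p → p ≤ 1 →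
      μ {ω | P i ω ≤ p} = ENNReal.ofReal p)
    (hA2 : ∀ i, ∀ p p' : ℝ, 0 ≤ p → p ≤ p' → p' ≤ 1 →
      ENNReal.ofReal p' * μ {ω | P i ω ≤ p} ≤
        ENNReal.ofReal p * μ {ω | P i ω ≤ p'})
    (hA3 : ProbabilityTheory.iIndepFun P μ)
    (pval : (Fin n ⊕ Fin n) → Ω → ℝ)
    (hpvalT : ∀ i, pval (Sum.inl i) = P i)
    (hpvalF : ∀ i ω, pval (Sum.inr i) ω = 1 - P i ω)
    -- critical values α_j = α/(n − j + 1 + α), 1-based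
    (crit : ℕ → ℝ)
    (hcrit : ∀ j, 1 ≤ j → j ≤ n → crit j = α / ((n : ℝ) - (j : ℝ) + 1 + α))
    -- i* of the stepdown procedure
    (istar : Ω → ℕ)
    (histar : ∀ ω, istar ω = (Finset.range (n + 1)).sup (fun i =>
      if ∀ j ∈ Finset.Icc 1 i,
          j ≤ (Finset.univ.filter
            (fun k : Fin n ⊕ Fin n => pval k ω ≤ crit j)).card
        then i else 0)) :
    μ {ω | ∃ i : Fin n, 1 ≤ istar ω ∧ P i ω ≤ crit (istar ω)} ≤
      ENNReal.ofReal α := by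
  classical
  have hα0 : (0:ℝ) ≤ α := le_of_lt hα
  -- basic facts about crit
  have hcrit_pos : ∀ j, 1 ≤ j → j ≤ n → 0 < crit j := by
    intro j h1 h2
    rw [hcrit j h1 h2]
    have hj : (j:ℝ) ≤ n := by exact_mod_cast h2
    have : (0:ℝ) < (n:ℝ) - j + 1 + α := by linarith
    exact div_pos hα this
  have hcrit_mono : ∀ j j', 1 ≤ j → j ≤ j' → j' ≤ n → crit j ≤ crit j' := by
    intro j j' h1 h2 h3
    rw [hcrit j h1 (le_trans h2 h3), hcrit j' (le_trans h1 h2) h3]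
    have hj : (j:ℝ) ≤ (j':ℝ) := by exact_mod_cast h2
    have hj' : (j':ℝ) ≤ n := by exact_mod_cast h3
    have hd' : (0:ℝ) < (n:ℝ) - j' + 1 + α := by linarith
    gcongr
  have hcrit_half : ∀ j, 1 ≤ j → j ≤ n → crit j < 1/2 := by
    intro j h1 h2
    have hle := hcrit_mono j n h1 h2 le_rfl
    have hcn : crit n = α / ((n:ℝ) - n + 1 + α) := hcrit n hn le_rfl
    have harg : (n:ℝ) - n + 1 + α = 1 + α := by ring
    rw [harg] at hcn
    have : crit n < 1/2 := by
      rw [hcn, div_lt_iff₀ (by linarith)]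
      linarith
    linarith
  -- value of crit
  have hcval : ∀ k : ℕ, k < n → crit (k+1) = α / (((n:ℝ) - k) + α) := by
    intro k hk
    rw [hcrit (k+1) (by omega) (by omega)]
    congr 1
    push_cast
    ring
  -- measurability of K
  have hKmeas : ∀ i : Fin n, Measurable (fun ω => KV n crit i (fun i' => P i' ω)) :=
    fun i => (KV_measurable n crit i).comp (measurable_pi_lambda _ (fun i' => hmeas i'))
  have hB2meas : ∀ (i : Fin n) (k : ℕ),
      MeasurableSet ({ω | KV n crit i (fun i' => P i' ω) = k} ∩ {ω | P i ω < 1 - crit (k+1)}) := by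
    intro i k
    exact ((hKmeas i) (measurableSet_singleton k)).inter
      (measurableSet_lt (hmeas i) measurable_const)
  -- Step 1: pathwise inclusion
  have hincl : {ω | ∃ i : Fin n, 1 ≤ istar ω ∧ P i ω ≤ crit (istar ω)}
      ⊆ ⋃ (i : Fin n), ⋃ k ∈ Finset.range n,
        ({ω | KV n crit i (fun i' => P i' ω) = k} ∩ {ω | P i ω ≤ crit (k+1)}) := by
    intro ω hω
    obtain ⟨i, hist1, hPi⟩ := hω
    have histn : istar ω ≤ n := by
      rw [histar ω]
      apply sup_le_of
      intro k
      split
      · exact le_rfl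
      · exact Nat.zero_le _
    have hcist : ∀ j ∈ Finset.Icc 1 (istar ω),
        j ≤ (Finset.univ.filter (fun k : Fin n ⊕ Fin n => pval k ω ≤ crit j)).card := by
      have hrw := histar ω
      rw [hrw]
      refine sup_spec_of n (fun i0 => ∀ j ∈ Finset.Icc 1 i0,
        j ≤ (Finset.univ.filter (fun k : Fin n ⊕ Fin n => pval k ω ≤ crit j)).card) _
        (by intro j hj; simp at hj) ?_
      intro k hk
      revert hk
      split
      · rename_i hcond
        intro _
        exact ⟨hcond, rfl⟩
      · intro hk
        exact absurd rfl hk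
    obtain ⟨i₀, -, hmin⟩ := Finset.exists_min_image Finset.univ (fun i' => P i' ω)
      ⟨i, Finset.mem_univ i⟩
    have hPi₀ : P i₀ ω ≤ crit (istar ω) := le_trans (hmin i (Finset.mem_univ i)) hPi
    have hex : ∃ j, 1 ≤ j ∧ j ≤ istar ω ∧ P i₀ ω ≤ crit j := ⟨istar ω, hist1, le_rfl, hPi₀⟩
    obtain ⟨hj₀1, hj₀ist, hPj₀⟩ := Nat.find_spec hex
    set j₀ := Nat.find hex with hj₀def
    have hcondK : CondV n crit i₀ (j₀ - 1) (fun i' => P i' ω) := by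
      intro j hj
      rw [Finset.mem_Icc] at hj
      have hj1 : 1 ≤ j := hj.1
      have hjlt : j < j₀ := by omega
      have hjist : j ≤ istar ω := by omega
      have hcnt := hcist j (Finset.mem_Icc.2 ⟨hj1, hjist⟩)
      rw [card_filter_sum_type] at hcnt
      have hT : (Finset.univ.filter (fun x : Fin n => pval (Sum.inl x) ω ≤ crit j)).card = 0 := by
        rw [Finset.card_eq_zero, Finset.filter_eq_empty_iff]
        intro x _
        rw [hpvalT x]
        intro hle
        exact Nat.find_min hex hjlt ⟨hj1, hjist, le_trans (hmin x (Finset.mem_univ x)) hle⟩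
      have hF : (Finset.univ.filter (fun x : Fin n => pval (Sum.inr x) ω ≤ crit j)).card
          = (Finset.univ.filter (fun x : Fin n => 1 - crit j ≤ P x ω)).card := by
        congr 1
        apply Finset.filter_congr
        intro x _
        rw [hpvalF x ω]
        constructor <;> intro h <;> linarith
      have hi₀notin : ¬ (1 - crit j ≤ P i₀ ω) := by
        intro hcon
        have h1 : crit (istar ω) ≤ crit n := hcrit_mono _ _ hist1 histn le_rfl
        have h2 : crit j ≤ crit n := hcrit_mono j n hj1 (le_trans hjist histn) le_rfl
        have h3 : crit n < 1/2 := hcrit_half n hn le_rfl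
        linarith
      have hLeq : LSet n crit i₀ j (fun i' => P i' ω)
          = Finset.univ.filter (fun x : Fin n => 1 - crit j ≤ P x ω) := by
        rw [LSet, Finset.filter_erase, Finset.erase_eq_of_notMem]
        intro hmem
        exact hi₀notin (Finset.mem_filter.1 hmem).2
      rw [hLeq]
      omega
    have hKge : j₀ - 1 ≤ KV n crit i₀ (fun i' => P i' ω) :=
      KV_ge n crit i₀ _ (j₀-1) (by omega) hcondK
    have hKle : KV n crit i₀ (fun i' => P i' ω) ≤ n - 1 := KV_le n crit i₀ _
    refine Set.mem_iUnion.2 ⟨i₀, Set.mem_iUnion.2 ⟨KV n crit i₀ (fun i' => P i' ω),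
      Set.mem_iUnion.2 ⟨Finset.mem_range.2 (by omega), ⟨rfl, ?_⟩⟩⟩⟩
    exact le_trans hPj₀ (hcrit_mono j₀ (KV n crit i₀ (fun i' => P i' ω) + 1)
      hj₀1 (by omega) (by omega))
  -- Step 2: per-term bound
  have hterm : ∀ i : Fin n, ∀ k ∈ Finset.range n,
      μ ({ω | KV n crit i (fun i' => P i' ω) = k} ∩ {ω | P i ω ≤ crit (k+1)})
        ≤ ENNReal.ofReal (α / ((n:ℝ) - k)) *
          μ ({ω | KV n crit i (fun i' => P i' ω) = k} ∩ {ω | P i ω < 1 - crit (k+1)}) := by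
    intro i k hk
    rw [Finset.mem_range] at hk
    have hk1 : 1 ≤ k + 1 := by omega
    have hkn : k + 1 ≤ n := by omega
    have hcpos : 0 < crit (k+1) := hcrit_pos (k+1) hk1 hkn
    have hchalf : crit (k+1) < 1/2 := hcrit_half (k+1) hk1 hkn
    have hd : (0:ℝ) < (n:ℝ) - k := by
      have : (k:ℝ) < n := by exact_mod_cast hk
      linarith
    have hxle : μ {ω | P i ω ≤ crit (k+1)} ≤ 1 := prob_le_one
    have hkey : ENNReal.ofReal (1 - crit (k+1)) * μ {ω | P i ω ≤ crit (k+1)}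
        ≤ ENNReal.ofReal (crit (k+1)) * μ {ω | P i ω < 1 - crit (k+1)} := by
      apply aux_limit hxle (crit (k+1)) hcpos hchalf
      intro p' hp1 hp2
      refine le_trans (hA2 i (crit (k+1)) p' (le_of_lt hcpos) hp1 (by linarith)) ?_
      exact mul_le_mul_right (measure_mono (fun ω hω => lt_of_le_of_lt hω hp2)) _
    have hratio : μ {ω | P i ω ≤ crit (k+1)}
        ≤ ENNReal.ofReal (α / ((n:ℝ) - k)) * μ {ω | P i ω < 1 - crit (k+1)} := by
      have hne0 : ENNReal.ofReal (1 - crit (k+1)) ≠ 0 :=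
        (ENNReal.ofReal_pos.mpr (by linarith)).ne'
      have hfin : ENNReal.ofReal (1 - crit (k+1)) ≠ ⊤ := ENNReal.ofReal_ne_top
      have hdiv : μ {ω | P i ω ≤ crit (k+1)}
          ≤ (ENNReal.ofReal (crit (k+1)) * μ {ω | P i ω < 1 - crit (k+1)})
            / ENNReal.ofReal (1 - crit (k+1)) :=
        (ENNReal.le_div_iff_mul_le (Or.inl hne0) (Or.inl hfin)).mpr
          (by rw [mul_comm]; exact hkey)
      refine le_trans hdiv (le_of_eq ?_)
      have harg : α / ((n:ℝ) - k) = crit (k+1) / (1 - crit (k+1)) := by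
        have hca : crit (k+1) = α / ((n:ℝ) - k + α) := hcval k hk
        have hda : (0:ℝ) < (n:ℝ) - k + α := by linarith
        have h1c : 1 - crit (k+1) = ((n:ℝ) - k) / ((n:ℝ) - k + α) := by
          rw [hca]
          field_simp
          ring
        rw [h1c, hca]
        rw [div_div_div_cancel_right₀]
        exact hda.ne'
      rw [harg, ENNReal.ofReal_div_of_pos (by linarith), div_eq_mul_inv,
        div_eq_mul_inv, mul_right_comm]
    calc μ ({ω | KV n crit i (fun i' => P i' ω) = k} ∩ {ω | P i ω ≤ crit (k+1)})
        = μ {ω | KV n crit i (fun i' => P i' ω) = k} * μ {ω | P i ω ≤ crit (k+1)} :=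
          KV_indep μ crit P hmeas hA3 i k (Set.Iic (crit (k+1))) measurableSet_Iic
      _ ≤ μ {ω | KV n crit i (fun i' => P i' ω) = k} *
            (ENNReal.ofReal (α / ((n:ℝ) - k)) * μ {ω | P i ω < 1 - crit (k+1)}) :=
          mul_le_mul_right hratio _
      _ = ENNReal.ofReal (α / ((n:ℝ) - k)) *
            (μ {ω | KV n crit i (fun i' => P i' ω) = k} * μ {ω | P i ω < 1 - crit (k+1)}) := by
          ring
      _ = ENNReal.ofReal (α / ((n:ℝ) - k)) *
            μ ({ω | KV n crit i (fun i' => P i' ω) = k} ∩ {ω | P i ω < 1 - crit (k+1)}) := by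
          exact congrArg (fun z => ENNReal.ofReal (α / ((n:ℝ) - k)) * z)
            (KV_indep μ crit P hmeas hA3 i k (Set.Iio (1 - crit (k+1))) measurableSet_Iio).symm
  -- Step 3: pathwise weight bound
  have hpath : ∀ ω : Ω, (∑ i : Fin n, ∑ k ∈ Finset.range n,
      ({ω' | KV n crit i (fun i' => P i' ω') = k} ∩ {ω' | P i ω' < 1 - crit (k+1)}).indicator
        (fun _ => ENNReal.ofReal (1/((n:ℝ) - k))) ω) ≤ 1 := by
    intro ω
    have hsum_i : ∀ i : Fin n, (∑ k ∈ Finset.range n,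
        ({ω' | KV n crit i (fun i' => P i' ω') = k} ∩ {ω' | P i ω' < 1 - crit (k+1)}).indicator
          (fun _ => ENNReal.ofReal (1/((n:ℝ) - k))) ω)
        = if P i ω < 1 - crit (KV n crit i (fun i' => P i' ω) + 1)
            then ENNReal.ofReal (1/((n:ℝ) - KV n crit i (fun i' => P i' ω))) else 0 := by
      intro i
      rw [Finset.sum_eq_single (KV n crit i (fun i' => P i' ω))]
      · by_cases h : P i ω < 1 - crit (KV n crit i (fun i' => P i' ω) + 1)
        · rw [if_pos h, Set.indicator_of_mem
            (show ω ∈ ({ω' | KV n crit i (fun i' => P i' ω') = KV n crit i (fun i' => P i' ω)}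
              ∩ {ω' | P i ω' < 1 - crit (KV n crit i (fun i' => P i' ω) + 1)})
              from Set.mem_inter rfl h)]
        · rw [if_neg h, Set.indicator_of_notMem (fun hmem => h hmem.2)]
      · intro k _ hkne
        exact Set.indicator_of_notMem (fun hmem => hkne hmem.1.symm) _
      · intro hnotmem
        exfalso
        have := KV_le n crit i (fun i' => P i' ω)
        exact hnotmem (Finset.mem_range.2 (by omega))
    simp only [hsum_i]
    rw [← Finset.sum_filter]
    set S := Finset.univ.filter (fun i : Fin n =>
      P i ω < 1 - crit (KV n crit i (fun i' => P i' ω) + 1)) with hSdef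
    rcases S.eq_empty_or_nonempty with hS | ⟨i₁, hi₁⟩
    · rw [hS, Finset.sum_empty]; exact zero_le
    · have hKle₁ : KV n crit i₁ (fun i' => P i' ω) ≤ n - 1 := KV_le n crit i₁ _
      have hnotlt : ∀ i ∈ S, ∀ i' ∈ S,
          ¬ (KV n crit i' (fun i'' => P i'' ω) < KV n crit i (fun i'' => P i'' ω)) := by
        intro i hiS i' hi'S hlt
        have hKlei : KV n crit i (fun i'' => P i'' ω) ≤ n - 1 := KV_le n crit i _
        have hCi := KV_spec n crit i (fun i'' => P i'' ω)
        have hPi' : P i' ω < 1 - crit (KV n crit i' (fun i'' => P i'' ω) + 1) := by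
          have := Finset.mem_filter.1 hi'S
          exact this.2
        have hcond' : CondV n crit i' (KV n crit i' (fun i'' => P i'' ω) + 1)
            (fun i'' => P i'' ω) := by
          intro j hj
          rw [Finset.mem_Icc] at hj
          have hjKi : j ≤ KV n crit i (fun i'' => P i'' ω) := by omega
          have hsub : LSet n crit i j (fun i'' => P i'' ω)
              ⊆ LSet n crit i' j (fun i'' => P i'' ω) := by
            intro x hx
            rw [LSet, Finset.mem_filter, Finset.mem_erase] at hx
            rw [LSet, Finset.mem_filter, Finset.mem_erase]
            refine ⟨⟨?_, Finset.mem_univ x⟩, hx.2⟩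
            rintro rfl
            have hmono : crit j ≤ crit (KV n crit x (fun i'' => P i'' ω) + 1) :=
              hcrit_mono j _ hj.1 hj.2 (by omega)
            have := hx.2
            linarith
          exact le_trans (hCi j (Finset.mem_Icc.2 ⟨hj.1, hjKi⟩)) (Finset.card_le_card hsub)
        have := KV_ge n crit i' (fun i'' => P i'' ω) _ (by omega) hcond'
        omega
      have hKeq : ∀ i ∈ S, KV n crit i (fun i' => P i' ω) = KV n crit i₁ (fun i' => P i' ω) := by
        intro i hiS
        have h1 := hnotlt i hiS i₁ hi₁
        have h2 := hnotlt i₁ hi₁ i hiS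
        omega
      have hcardS : S.card + KV n crit i₁ (fun i' => P i' ω) ≤ n := by
        rcases Nat.eq_zero_or_pos (KV n crit i₁ (fun i' => P i' ω)) with h0 | hpos
        · have hle : S.card ≤ n := by
            refine le_trans (Finset.card_filter_le _ _) ?_
            simp
          omega
        · have hC := KV_spec n crit i₁ (fun i' => P i' ω)
          have hcnt := hC (KV n crit i₁ (fun i' => P i' ω))
            (Finset.mem_Icc.2 ⟨hpos, le_rfl⟩)
          have hdisj : Disjoint S (LSet n crit i₁ (KV n crit i₁ (fun i' => P i' ω))
              (fun i' => P i' ω)) := by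
            rw [Finset.disjoint_left]
            intro x hxS hxL
            rw [LSet, Finset.mem_filter] at hxL
            have hxlt : P x ω < 1 - crit (KV n crit x (fun i' => P i' ω) + 1) :=
              (Finset.mem_filter.1 hxS).2
            have hxK := hKeq x hxS
            rw [hxK] at hxlt
            have hmono : crit (KV n crit i₁ (fun i' => P i' ω))
                ≤ crit (KV n crit i₁ (fun i' => P i' ω) + 1) :=
              hcrit_mono _ _ hpos (by omega) (by omega)
            have := hxL.2
            linarith
          have hunion : S.card + (LSet n crit i₁ (KV n crit i₁ (fun i' => P i' ω))
              (fun i' => P i' ω)).card ≤ n := by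
            rw [← Finset.card_union_of_disjoint hdisj]
            refine le_trans (Finset.card_le_univ _) ?_
            simp
          omega
      calc (∑ i ∈ S, ENNReal.ofReal (1/((n:ℝ) - KV n crit i (fun i' => P i' ω))))
          = ∑ _i ∈ S, ENNReal.ofReal (1/((n:ℝ) - KV n crit i₁ (fun i' => P i' ω))) := by
            refine Finset.sum_congr rfl (fun i hiS => ?_)
            rw [hKeq i hiS]
        _ = S.card • ENNReal.ofReal (1/((n:ℝ) - KV n crit i₁ (fun i' => P i' ω))) :=
            Finset.sum_const _
        _ = (S.card : ℝ≥0∞) * ENNReal.ofReal (1/((n:ℝ) - KV n crit i₁ (fun i' => P i' ω))) :=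
            nsmul_eq_mul _ _
        _ ≤ 1 := by
            rw [← ENNReal.ofReal_natCast, ← ENNReal.ofReal_mul (by positivity)]
            apply ENNReal.ofReal_le_one.2
            have hklt : KV n crit i₁ (fun i' => P i' ω) < n := by omega
            have hd0 : (0:ℝ) < (n:ℝ) - KV n crit i₁ (fun i' => P i' ω) := by
              have : ((KV n crit i₁ (fun i' => P i' ω)):ℝ) < n := by exact_mod_cast hklt
              linarith
            rw [mul_one_div]
            rw [div_le_one hd0]
            have hc2 : (S.card:ℝ) + (KV n crit i₁ (fun i' => P i' ω) : ℝ) ≤ n := by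
              exact_mod_cast hcardS
            linarith
  -- Step 4: assembly
  have hstep1 : μ {ω | ∃ i : Fin n, 1 ≤ istar ω ∧ P i ω ≤ crit (istar ω)}
      ≤ ∑ i : Fin n, ∑ k ∈ Finset.range n,
        μ ({ω | KV n crit i (fun i' => P i' ω) = k} ∩ {ω | P i ω ≤ crit (k+1)}) := by
    refine le_trans (measure_mono hincl) ?_
    refine le_trans (measure_iUnion_fintype_le _ _) ?_
    refine Finset.sum_le_sum (fun i _ => ?_)
    exact measure_biUnion_finset_le _ _
  have hstep2 : (∑ i : Fin n, ∑ k ∈ Finset.range n,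
      μ ({ω | KV n crit i (fun i' => P i' ω) = k} ∩ {ω | P i ω ≤ crit (k+1)}))
      ≤ ∑ i : Fin n, ∑ k ∈ Finset.range n, ENNReal.ofReal (α / ((n:ℝ) - k)) *
        μ ({ω | KV n crit i (fun i' => P i' ω) = k} ∩ {ω | P i ω < 1 - crit (k+1)}) :=
    Finset.sum_le_sum (fun i _ => Finset.sum_le_sum (fun k hk => hterm i k hk))
  have hstep3 : (∑ i : Fin n, ∑ k ∈ Finset.range n, ENNReal.ofReal (α / ((n:ℝ) - k)) *
      μ ({ω | KV n crit i (fun i' => P i' ω) = k} ∩ {ω | P i ω < 1 - crit (k+1)}))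
      = ENNReal.ofReal α * ∑ i : Fin n, ∑ k ∈ Finset.range n, ENNReal.ofReal (1/((n:ℝ) - k)) *
        μ ({ω | KV n crit i (fun i' => P i' ω) = k} ∩ {ω | P i ω < 1 - crit (k+1)}) := by
    rw [Finset.mul_sum]
    refine Finset.sum_congr rfl (fun i _ => ?_)
    rw [Finset.mul_sum]
    refine Finset.sum_congr rfl (fun k _ => ?_)
    rw [← mul_assoc, ← ENNReal.ofReal_mul hα0, mul_one_div]
  have hstep4 : (∑ i : Fin n, ∑ k ∈ Finset.range n, ENNReal.ofReal (1/((n:ℝ) - k)) *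
      μ ({ω | KV n crit i (fun i' => P i' ω) = k} ∩ {ω | P i ω < 1 - crit (k+1)})) ≤ 1 := by
    have hrw : ∀ (i : Fin n) (k : ℕ), ENNReal.ofReal (1/((n:ℝ) - k)) *
        μ ({ω | KV n crit i (fun i' => P i' ω) = k} ∩ {ω | P i ω < 1 - crit (k+1)})
        = ∫⁻ ω, ({ω' | KV n crit i (fun i' => P i' ω') = k}
            ∩ {ω' | P i ω' < 1 - crit (k+1)}).indicator
            (fun _ => ENNReal.ofReal (1/((n:ℝ) - k))) ω ∂μ := by
      intro i k
      rw [lintegral_indicator_const (hB2meas i k)]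
    calc (∑ i : Fin n, ∑ k ∈ Finset.range n, ENNReal.ofReal (1/((n:ℝ) - k)) *
        μ ({ω | KV n crit i (fun i' => P i' ω) = k} ∩ {ω | P i ω < 1 - crit (k+1)}))
        = ∫⁻ ω, (∑ i : Fin n, ∑ k ∈ Finset.range n,
            ({ω' | KV n crit i (fun i' => P i' ω') = k}
              ∩ {ω' | P i ω' < 1 - crit (k+1)}).indicator
              (fun _ => ENNReal.ofReal (1/((n:ℝ) - k))) ω) ∂μ := by
          rw [lintegral_finset_sum _ (fun i _ => Finset.measurable_sum _
            (fun k _ => measurable_const.indicator (hB2meas i k)))]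
          refine Finset.sum_congr rfl (fun i _ => ?_)
          rw [lintegral_finset_sum _ (fun k _ => measurable_const.indicator (hB2meas i k))]
          exact Finset.sum_congr rfl (fun k _ => hrw i k)
      _ ≤ ∫⁻ _ω, (1:ℝ≥0∞) ∂μ := lintegral_mono hpath
      _ = 1 := by simp
  calc μ {ω | ∃ i : Fin n, 1 ≤ istar ω ∧ P i ω ≤ crit (istar ω)}
      ≤ ENNReal.ofReal α * ∑ i : Fin n, ∑ k ∈ Finset.range n, ENNReal.ofReal (1/((n:ℝ) - k)) *
        μ ({ω | KV n crit i (fun i' => P i' ω) = k} ∩ {ω | P i ω < 1 - crit (k+1)}) := by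
        rw [← hstep3]
        exact le_trans hstep1 hstep2
    _ ≤ ENNReal.ofReal α * 1 := mul_le_mul_right hstep4 _
    _ = ENNReal.ofReal α := mul_one _
end

section
/- The Benjamini–Hochberg-type stepup procedure with critical values α_i = iα/n, i = 1,...,n, applied to the 2n one-sided p-values (P₁,...,P_{2n}) with P_{n+i} = 1 − P_i, controls the FDR at level α under assumptions A.1 and A.3: for every parameter vector θ, E_θ[V₁/max(R₁,1)] ≤ α, where V₁ is the number of rejected true nulls and R₁ the total number of rejections. -/
open MeasureTheory Finset
open scoped Classical

/- aux -/
namespace BHAux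



variable {Ω : Type*}

/-- Count of the other pairs' p-values below level `j*α/n`. -/
noncomputable def cnt (n : ℕ) (α : ℝ) (P : Fin n → Ω → ℝ) (m : Fin n) (ω : Ω) (j : ℕ) : ℕ :=
  ∑ t ∈ Finset.univ.erase m,
    ((if P t ω ≤ (j : ℝ) * α / (n : ℝ) then 1 else 0) +
      (if 1 - P t ω ≤ (j : ℝ) * α / (n : ℝ) then 1 else 0))

/-- Leave-one-pair-out stepup index. -/
noncomputable def rho (n : ℕ) (α : ℝ) (P : Fin n → Ω → ℝ) (m : Fin n) (ω : Ω) : ℕ :=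
  (Finset.range (n + 1)).sup (fun j => if j ≤ cnt n α P m ω j + 1 then j else 0)

lemma stepup_le (n : ℕ) (D : ℕ → ℕ) :
    (Finset.range (n + 1)).sup (fun j => if j ≤ D j then j else 0) ≤ n := by
  apply Finset.sup_le
  intro j hj
  split
  · exact Nat.lt_succ_iff.mp (Finset.mem_range.mp hj)
  · exact Nat.zero_le n

lemma stepup_ge (n : ℕ) (D : ℕ → ℕ) {j : ℕ} (hj : j ≤ n) (h : j ≤ D j) :
    j ≤ (Finset.range (n + 1)).sup (fun j => if j ≤ D j then j else 0) := by
  have := Finset.le_sup (f := fun j => if j ≤ D j then j else 0)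
    (Finset.mem_range.mpr (Nat.lt_succ_of_le hj))
  simpa [if_pos h] using this

lemma stepup_count (n : ℕ) (D : ℕ → ℕ)
    (h1 : 1 ≤ (Finset.range (n + 1)).sup (fun j => if j ≤ D j then j else 0)) :
    (Finset.range (n + 1)).sup (fun j => if j ≤ D j then j else 0) ≤
      D ((Finset.range (n + 1)).sup (fun j => if j ≤ D j then j else 0)) := by
  obtain ⟨j, hj, hEq⟩ := Finset.exists_mem_eq_sup (Finset.range (n + 1))
    (Finset.nonempty_range_iff.mpr (Nat.succ_ne_zero n)) (fun j => if j ≤ D j then j else 0)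
  by_cases h : j ≤ D j
  · rw [if_pos h] at hEq
    rw [hEq]
    exact h
  · rw [if_neg h] at hEq
    omega

lemma stepup_le' (n : ℕ) (D : ℕ → ℕ) {s : ℕ}
    (hs : s = (Finset.range (n + 1)).sup (fun j => if j ≤ D j then j else 0)) : s ≤ n :=
  hs ▸ stepup_le n D

lemma stepup_ge' (n : ℕ) (D : ℕ → ℕ) {s : ℕ}
    (hs : s = (Finset.range (n + 1)).sup (fun j => if j ≤ D j then j else 0))
    {j : ℕ} (hj : j ≤ n) (h : j ≤ D j) : j ≤ s :=
  hs ▸ stepup_ge n D hj h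

lemma stepup_count' (n : ℕ) (D : ℕ → ℕ) {s : ℕ}
    (hs : s = (Finset.range (n + 1)).sup (fun j => if j ≤ D j then j else 0))
    (h1 : 1 ≤ s) : s ≤ D s := by
  subst hs; exact stepup_count n D h1


lemma card_eq_cnt (n : ℕ) (α : ℝ) (P : Fin n → Ω → ℝ)
    (pval : (Fin n ⊕ Fin n) → Ω → ℝ)
    (hpvalT : ∀ i, pval (Sum.inl i) = P i)
    (hpvalF : ∀ i ω, pval (Sum.inr i) ω = 1 - P i ω)
    (m : Fin n) (ω : Ω) (j : ℕ) :
    (Finset.univ.filter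
        (fun k : Fin n ⊕ Fin n => pval k ω ≤ (j : ℝ) * α / (n : ℝ))).card
      = cnt n α P m ω j +
        ((if P m ω ≤ (j : ℝ) * α / (n : ℝ) then 1 else 0) +
          (if 1 - P m ω ≤ (j : ℝ) * α / (n : ℝ) then 1 else 0)) := by
  classical
  rw [Finset.card_filter]
  rw [Fintype.sum_sum_type]
  simp only [hpvalT, hpvalF]
  unfold cnt
  rw [Finset.sum_add_distrib]
  rw [← Finset.add_sum_erase Finset.univ
      (fun a => if P a ω ≤ (j : ℝ) * α / (n : ℝ) then 1 else 0) (Finset.mem_univ m),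
    ← Finset.add_sum_erase Finset.univ
      (fun a => if 1 - P a ω ≤ (j : ℝ) * α / (n : ℝ) then 1 else 0) (Finset.mem_univ m)]
  ring

lemma cnt_pair (n : ℕ) (α : ℝ) (P : Fin n → Ω → ℝ) (m : Fin n) (ω : Ω)
    (hn : 1 ≤ n) (hhalf : (1 : ℝ) / 2 ≤ α) :
    n - 1 ≤ cnt n α P m ω n := by
  have hn0 : (n : ℝ) ≠ 0 := Nat.cast_ne_zero.mpr (by omega)
  have hna : (n : ℝ) * α / (n : ℝ) = α := by field_simp
  have hterm : ∀ t ∈ Finset.univ.erase m,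
      1 ≤ (if P t ω ≤ (n : ℝ) * α / (n : ℝ) then 1 else 0) +
        (if 1 - P t ω ≤ (n : ℝ) * α / (n : ℝ) then 1 else 0) := by
    intro t _
    rw [hna]
    by_cases h1 : P t ω ≤ α
    · rw [if_pos h1]; omega
    · rw [if_neg h1, if_pos (show 1 - P t ω ≤ α by push_neg at h1; linarith)]
  calc n - 1 = (Finset.univ.erase m).card := by
        rw [Finset.card_erase_of_mem (Finset.mem_univ m), Finset.card_univ, Fintype.card_fin]
    _ ≤ cnt n α P m ω n := by
        unfold cnt
        rw [Finset.card_eq_sum_ones]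
        exact Finset.sum_le_sum hterm

/-- Master deterministic lemma: on the event that the true null `m` is rejected,
the stepup index coincides with the leave-one-pair-out index. -/
lemma master (n : ℕ) (hn : 1 ≤ n) (α : ℝ) (hα : 0 < α)
    (P : Fin n → Ω → ℝ)
    (pval : (Fin n ⊕ Fin n) → Ω → ℝ)
    (hpvalT : ∀ i, pval (Sum.inl i) = P i)
    (hpvalF : ∀ i ω, pval (Sum.inr i) ω = 1 - P i ω)
    (m : Fin n) (ω : Ω) (r : ℕ)
    (hr1 : 1 ≤ r) (hrn : r ≤ n)
    (hcard : r ≤ (Finset.univ.filter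
        (fun k : Fin n ⊕ Fin n => pval k ω ≤ (r : ℝ) * α / (n : ℝ))).card)
    (hmax : ∀ j, j ≤ n → j ≤ (Finset.univ.filter
        (fun k : Fin n ⊕ Fin n => pval k ω ≤ (j : ℝ) * α / (n : ℝ))).card → j ≤ r)
    (hu : P m ω ≤ (r : ℝ) * α / (n : ℝ)) :
    rho n α P m ω = r := by
  have hn0 : (0 : ℝ) < (n : ℝ) := by exact_mod_cast Nat.pos_of_ne_zero (by omega)
  have cardEq := card_eq_cnt n α P pval hpvalT hpvalF m ω
  have hmono : ∀ j j' : ℕ, j ≤ j' → (j : ℝ) * α / (n : ℝ) ≤ (j' : ℝ) * α / (n : ℝ) := by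
    intro j j' h
    have : (j : ℝ) ≤ (j' : ℝ) := by exact_mod_cast h
    gcongr
  by_cases h2 : 1 - P m ω ≤ (r : ℝ) * α / (n : ℝ)
  · -- both members of pair m below the cutoff: forces α ≥ 1/2 and r = ρ = n
    have hra : (r : ℝ) * α / (n : ℝ) ≤ α := by
      rw [div_le_iff₀ hn0]
      have : (r : ℝ) ≤ (n : ℝ) := by exact_mod_cast hrn
      nlinarith
    have hhalf : (1 : ℝ) / 2 ≤ α := by linarith
    have hpair := cnt_pair n α P m ω hn hhalf
    have hun : P m ω ≤ (n : ℝ) * α / (n : ℝ) := le_trans hu (hmono r n hrn)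
    have hcardn : n ≤ (Finset.univ.filter
        (fun k : Fin n ⊕ Fin n => pval k ω ≤ (n : ℝ) * α / (n : ℝ))).card := by
      rw [cardEq n, if_pos hun]
      omega
    have hrn' : n ≤ r := hmax n le_rfl hcardn
    have hrEq : r = n := le_antisymm hrn hrn'
    have hρ : rho n α P m ω = n := by
      apply le_antisymm (stepup_le n _)
      exact stepup_ge n _ le_rfl (by omega)
    rw [hρ, hrEq]
  · -- partner above the cutoff
    have h1 : r ≤ cnt n α P m ω r + 1 := by
      have := hcard
      rw [cardEq r, if_pos hu, if_neg h2] at this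
      omega
    have hρr : r ≤ rho n α P m ω := stepup_ge n _ hrn h1
    have hρn : rho n α P m ω ≤ n := stepup_le n _
    have h3 : 1 ≤ rho n α P m ω := le_trans hr1 hρr
    have h4 : rho n α P m ω ≤ cnt n α P m ω (rho n α P m ω) + 1 := stepup_count n _ h3
    have h5 : P m ω ≤ ((rho n α P m ω : ℕ) : ℝ) * α / (n : ℝ) := le_trans hu (hmono r _ hρr)
    have h6 : rho n α P m ω ≤ (Finset.univ.filter
        (fun k : Fin n ⊕ Fin n => pval k ω ≤ ((rho n α P m ω : ℕ) : ℝ) * α / (n : ℝ))).card := by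
      rw [cardEq _, if_pos h5]
      omega
    exact le_antisymm (hmax _ hρn h6) hρr


noncomputable def cntV (n : ℕ) (α : ℝ) (T : Finset (Fin n)) (v : T → ℝ) (j : ℕ) : ℕ :=
  ∑ t : T, ((if v t ≤ (j : ℝ) * α / (n : ℝ) then 1 else 0) +
      (if 1 - v t ≤ (j : ℝ) * α / (n : ℝ) then 1 else 0))

def gsup (n : ℕ) (w : Fin (n + 1) → ℕ) : ℕ :=
  (Finset.range (n + 1)).sup (fun j => if j ≤ w ⟨min j n, by omega⟩ + 1 then j else 0)

noncomputable def Gfun (n : ℕ) (α : ℝ) (T : Finset (Fin n)) (v : T → ℝ) : ℕ :=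
  gsup n (fun j => cntV n α T v j.val)

lemma measurable_Gfun (n : ℕ) (α : ℝ) (T : Finset (Fin n)) :
    Measurable (Gfun n α T) := by
  apply (measurable_of_countable (gsup n)).comp
  apply measurable_pi_lambda
  intro j
  apply Finset.measurable_sum
  intro t _
  apply Measurable.add
  · exact Measurable.ite (measurableSet_le (measurable_pi_apply t) measurable_const)
      measurable_const measurable_const
  · exact Measurable.ite (measurableSet_le (measurable_const.sub (measurable_pi_apply t))
      measurable_const) measurable_const measurable_const

lemma Gfun_eq (n : ℕ) (α : ℝ) (P : Fin n → Ω → ℝ) (m : Fin n) :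
    (fun ω => Gfun n α (Finset.univ.erase m) (fun t => P t ω)) = rho n α P m := by
  funext ω
  unfold Gfun gsup rho
  apply Finset.sup_congr rfl
  intro j hj
  have hjn : j ≤ n := Nat.lt_succ_iff.mp (Finset.mem_range.mp hj)
  have hmin : min j n = j := Nat.min_eq_left hjn
  have hc : cntV n α (Finset.univ.erase m) (fun t => P t ω) (min j n) = cnt n α P m ω j := by
    rw [hmin]
    unfold cnt cntV
    exact Finset.sum_coe_sort (Finset.univ.erase m)
      (fun t => ((if P t ω ≤ (j : ℝ) * α / (n : ℝ) then (1 : ℕ) else 0) +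
        (if 1 - P t ω ≤ (j : ℝ) * α / (n : ℝ) then 1 else 0)))
  show (if j ≤ cntV n α (Finset.univ.erase m) (fun t => P t ω) (min j n) + 1 then j else 0)
      = if j ≤ cnt n α P m ω j + 1 then j else 0
  rw [hc]

lemma rho_measurable_indep [MeasurableSpace Ω] (μ : Measure Ω)
    (n : ℕ) (α : ℝ) (P : Fin n → Ω → ℝ) (hmeas : ∀ i, Measurable (P i))
    (hA3 : ProbabilityTheory.iIndepFun P μ) (m : Fin n) :
    Measurable (rho n α P m) ∧ ProbabilityTheory.IndepFun (P m) (rho n α P m) μ := by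
  classical
  have hYm : Measurable (fun ω (t : (Finset.univ.erase m : Finset (Fin n))) => P t ω) :=
    measurable_pi_lambda _ (fun t => hmeas t)
  constructor
  · exact (Gfun_eq n α P m) ▸ ((measurable_Gfun n α _).comp hYm)
  · have h := hA3.indepFun_finset {m} (Finset.univ.erase m)
      (by simp [Finset.disjoint_left]) hmeas
    have h2 := h.comp
      (φ := fun v : (({m} : Finset (Fin n)) → ℝ) => v ⟨m, Finset.mem_singleton_self m⟩)
      (ψ := Gfun n α (Finset.univ.erase m)) (show Measurable (fun v : (({m} : Finset (Fin n)) → ℝ) => v ⟨m, Finset.mem_singleton_self m⟩) from measurable_pi_apply _) (measurable_Gfun n α _)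
    have e2 : (Gfun n α (Finset.univ.erase m) ∘ fun a (t : (Finset.univ.erase m : Finset (Fin n))) => P t a)
        = rho n α P m := Gfun_eq n α P m
    rw [e2] at h2
    exact h2


end BHAux

/-- The BH-type stepup procedure with critical values αᵢ = iα/n,
i = 1,…,n, applied to the 2n one-sided p-values (true nulls Pᵢ, false nulls
1 − Pᵢ), controls the FDR at level α under assumptions A.1 and A.3:
E_θ[V₁/max(R₁,1)] ≤ α.  The stepup procedure rejects the R smallest p-values
where R = max{i : #{k : p_k ≤ iα/n} ≥ i}; a hypothesis is rejected iff R ≥ 1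
and its p-value is ≤ Rα/n. -/
theorem bh_type_stepup_fdr_control
    {Ω : Type*} [MeasurableSpace Ω] (μ : Measure Ω) [IsProbabilityMeasure μ]
    (n : ℕ) (hn : 1 ≤ n) (α : ℝ) (hα : 0 < α) (hα1 : α < 1)
    (θ : Fin n → ℝ) (P : Fin n → Ω → ℝ)
    (hmeas : ∀ i, Measurable (P i))
    -- A.1: true null p-values are stochastically larger than U(0,1)
    (hA1 : ∀ i, ∀ p : ℝ, 0 ≤ p → p ≤ 1 →
      μ {ω | P i ω ≤ p} ≤ ENNReal.ofReal p)
    -- A.3: independence of the statistics, hence of the pairs (Pᵢ, 1 − Pᵢ)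
    (hA3 : ProbabilityTheory.iIndepFun P μ)
    (pval : (Fin n ⊕ Fin n) → Ω → ℝ)
    (hpvalT : ∀ i, pval (Sum.inl i) = P i)
    (hpvalF : ∀ i ω, pval (Sum.inr i) ω = 1 - P i ω)
    -- R = the stepup index max{i ≤ n : #{k : p_k ≤ iα/n} ≥ i}
    (R : Ω → ℕ)
    (hR : ∀ ω, R ω = (Finset.range (n + 1)).sup (fun i =>
      if i ≤ (Finset.univ.filter
          (fun k : Fin n ⊕ Fin n => pval k ω ≤ (i : ℝ) * α / (n : ℝ))).card
        then i else 0))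
    -- V₁ = number of rejected true nulls, R₁ = total number of rejections
    (V₁ R₁ : Ω → ℕ)
    (hV₁ : ∀ ω, V₁ ω = (Finset.univ.filter
      (fun i : Fin n => 1 ≤ R ω ∧ P i ω ≤ (R ω : ℝ) * α / (n : ℝ))).card)
    (hR₁ : ∀ ω, R₁ ω = (Finset.univ.filter
      (fun k : Fin n ⊕ Fin n =>
        1 ≤ R ω ∧ pval k ω ≤ (R ω : ℝ) * α / (n : ℝ))).card) :
    ∫ ω, (V₁ ω : ℝ) / ((max (R₁ ω) 1 : ℕ) : ℝ) ∂μ ≤ α := by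
  classical
  have hn0 : (0 : ℝ) < (n : ℝ) := by exact_mod_cast Nat.pos_of_ne_zero (by omega)
  -- the events and the dominating function
  set A : Fin n → ℕ → Set Ω := fun m r =>
    {ω | BHAux.rho n α P m ω = r ∧ P m ω ≤ (r : ℝ) * α / (n : ℝ)} with hAdef
  have hrho := fun m => BHAux.rho_measurable_indep μ n α P hmeas hA3 m
  have hAmeas : ∀ m r, MeasurableSet (A m r) := by
    intro m r
    have : A m r = (BHAux.rho n α P m ⁻¹' {r}) ∩ {ω | P m ω ≤ (r : ℝ) * α / (n : ℝ)} := by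
      ext ω; simp [hAdef, Set.mem_setOf_eq]
    rw [this]
    exact ((hrho m).1 (measurableSet_singleton r)).inter
      (measurableSet_le (hmeas m) measurable_const)
  set g : Ω → ℝ := fun ω => ∑ m : Fin n, ∑ r ∈ Finset.Icc 1 n,
    (A m r).indicator (fun _ => (r : ℝ)⁻¹) ω with hgdef
  -- pointwise bound
  have key : ∀ ω, (V₁ ω : ℝ) / ((max (R₁ ω) 1 : ℕ) : ℝ) ≤ g ω := by
    intro ω
    have hg0 : 0 ≤ g ω := by
      apply Finset.sum_nonneg; intro m _
      apply Finset.sum_nonneg; intro r _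
      exact Set.indicator_nonneg (fun _ _ => by positivity) _
    by_cases h1 : 1 ≤ R ω
    swap
    · have hV0 : V₁ ω = 0 := by rw [hV₁ ω]; simp [h1]
      rw [hV0]; simpa using hg0
    · have hcardR : R ω ≤ (Finset.univ.filter
          (fun k : Fin n ⊕ Fin n => pval k ω ≤ ((R ω : ℕ) : ℝ) * α / (n : ℝ))).card :=
        BHAux.stepup_count' n (fun j => (Finset.univ.filter
          (fun k : Fin n ⊕ Fin n => pval k ω ≤ (j : ℝ) * α / (n : ℝ))).card) (hR ω) h1
      have hRn : R ω ≤ n := BHAux.stepup_le' n _ (hR ω)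
      have hmax : ∀ j, j ≤ n → j ≤ (Finset.univ.filter
          (fun k : Fin n ⊕ Fin n => pval k ω ≤ (j : ℝ) * α / (n : ℝ))).card → j ≤ R ω :=
        fun j hj hc => BHAux.stepup_ge' n _ (hR ω) hj hc
      have hR₁eq : R₁ ω = (Finset.univ.filter
          (fun k : Fin n ⊕ Fin n => pval k ω ≤ ((R ω : ℕ) : ℝ) * α / (n : ℝ))).card := by
        rw [hR₁ ω]
        congr 1
        apply Finset.filter_congr
        intro k _
        simp [h1]
      have hR₁R : R ω ≤ R₁ ω := by rw [hR₁eq]; exact hcardR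
      have hmaxEq : max (R₁ ω) 1 = R₁ ω := max_eq_left (le_trans h1 hR₁R)
      have hV₁eq : V₁ ω = (Finset.univ.filter
          (fun i : Fin n => P i ω ≤ ((R ω : ℕ) : ℝ) * α / (n : ℝ))).card := by
        rw [hV₁ ω]
        congr 1
        apply Finset.filter_congr
        intro k _
        simp [h1]
      rw [hmaxEq]
      have hRpos : (0 : ℝ) < ((R ω : ℕ) : ℝ) := by exact_mod_cast h1
      have step1 : (V₁ ω : ℝ) / (R₁ ω : ℝ) ≤ (V₁ ω : ℝ) / ((R ω : ℕ) : ℝ) := by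
        apply div_le_div_of_nonneg_left (by positivity) hRpos
        exact_mod_cast hR₁R
      refine le_trans step1 ?_
      rw [hV₁eq]
      rw [show ((Finset.univ.filter
          (fun i : Fin n => P i ω ≤ ((R ω : ℕ) : ℝ) * α / (n : ℝ))).card : ℝ) / ((R ω : ℕ) : ℝ)
        = ∑ _m ∈ Finset.univ.filter
          (fun i : Fin n => P i ω ≤ ((R ω : ℕ) : ℝ) * α / (n : ℝ)), (((R ω : ℕ) : ℝ))⁻¹ by
        rw [Finset.sum_const, nsmul_eq_mul, div_eq_mul_inv]]
      have hterm : ∀ m ∈ Finset.univ.filter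
          (fun i : Fin n => P i ω ≤ ((R ω : ℕ) : ℝ) * α / (n : ℝ)),
          (((R ω : ℕ) : ℝ))⁻¹ ≤ ∑ r ∈ Finset.Icc 1 n,
            (A m r).indicator (fun _ => (r : ℝ)⁻¹) ω := by
        intro m hm
        have hPm : P m ω ≤ ((R ω : ℕ) : ℝ) * α / (n : ℝ) := (Finset.mem_filter.mp hm).2
        have hrhoEq : BHAux.rho n α P m ω = R ω :=
          BHAux.master n hn α hα P pval hpvalT hpvalF m ω (R ω) h1 hRn hcardR hmax hPm
        have hmem : ω ∈ A m (R ω) := ⟨hrhoEq, hPm⟩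
        calc (((R ω : ℕ) : ℝ))⁻¹
            = (A m (R ω)).indicator (fun _ => (((R ω : ℕ) : ℝ))⁻¹) ω :=
              (Set.indicator_of_mem hmem (fun _ => (((R ω : ℕ) : ℝ))⁻¹)).symm
          _ ≤ ∑ r ∈ Finset.Icc 1 n, (A m r).indicator (fun _ => (r : ℝ)⁻¹) ω := by
              apply Finset.single_le_sum
                (f := fun r => (A m r).indicator (fun _ => (r : ℝ)⁻¹) ω)
                (fun r _ => Set.indicator_nonneg (fun _ _ => by positivity) _)
                (Finset.mem_Icc.mpr ⟨h1, hRn⟩)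
      calc ∑ _m ∈ Finset.univ.filter
            (fun i : Fin n => P i ω ≤ ((R ω : ℕ) : ℝ) * α / (n : ℝ)), (((R ω : ℕ) : ℝ))⁻¹
          ≤ ∑ m ∈ Finset.univ.filter
            (fun i : Fin n => P i ω ≤ ((R ω : ℕ) : ℝ) * α / (n : ℝ)),
            ∑ r ∈ Finset.Icc 1 n, (A m r).indicator (fun _ => (r : ℝ)⁻¹) ω :=
            Finset.sum_le_sum hterm
        _ ≤ ∑ m : Fin n, ∑ r ∈ Finset.Icc 1 n, (A m r).indicator (fun _ => (r : ℝ)⁻¹) ω := by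
            apply Finset.sum_le_sum_of_subset_of_nonneg (Finset.subset_univ _)
            intro m _ _
            apply Finset.sum_nonneg; intro r _
            exact Set.indicator_nonneg (fun _ _ => by positivity) _
        _ = g ω := rfl
  -- integrability of the dominating function
  have hgInt : Integrable g μ := by
    apply integrable_finset_sum
    intro m _
    apply integrable_finset_sum
    intro r _
    exact (integrable_const ((r : ℝ)⁻¹)).indicator (hAmeas m r)
  -- the integral bound
  have hIg : ∫ ω, g ω ∂μ ≤ α := by
    have hint : ∫ ω, g ω ∂μ
        = ∑ m : Fin n, ∑ r ∈ Finset.Icc 1 n, (μ (A m r)).toReal * (r : ℝ)⁻¹ := by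
      simp only [hgdef]
      rw [integral_finset_sum Finset.univ (fun (m : Fin n) _ => integrable_finset_sum
        (Finset.Icc 1 n)
        (fun (r : ℕ) _ => (integrable_const ((r : ℝ)⁻¹)).indicator (hAmeas m r)))]
      apply Finset.sum_congr rfl
      intro m _
      rw [integral_finset_sum (Finset.Icc 1 n)
        (fun (r : ℕ) _ => (integrable_const ((r : ℝ)⁻¹)).indicator (hAmeas m r))]
      apply Finset.sum_congr rfl
      intro r _
      rw [integral_indicator_const _ (hAmeas m r), smul_eq_mul, measureReal_def, mul_comm]
    rw [hint]
    have hmb : ∀ m : Fin n,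
        ∑ r ∈ Finset.Icc 1 n, (μ (A m r)).toReal * (r : ℝ)⁻¹ ≤ α / (n : ℝ) := by
      intro m
      have hind := (hrho m).2
      have hsum2 : ∑ r ∈ Finset.Icc 1 n,
          (μ (BHAux.rho n α P m ⁻¹' {r})).toReal ≤ 1 := by
        have hd : Set.PairwiseDisjoint (↑(Finset.Icc 1 n) : Set ℕ)
            (fun r => BHAux.rho n α P m ⁻¹' {r}) := by
          intro r _ r' _ hne
          apply Set.disjoint_left.mpr
          intro ω h1 h2
          simp only [Set.mem_preimage, Set.mem_singleton_iff] at h1 h2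
          exact hne (h1.symm.trans h2)
        have hle : ∑ r ∈ Finset.Icc 1 n, μ (BHAux.rho n α P m ⁻¹' {r}) ≤ 1 := by
          rw [← measure_biUnion_finset hd
            (fun r _ => (hrho m).1 (measurableSet_singleton r))]
          exact prob_le_one
        calc ∑ r ∈ Finset.Icc 1 n, (μ (BHAux.rho n α P m ⁻¹' {r})).toReal
            = (∑ r ∈ Finset.Icc 1 n, μ (BHAux.rho n α P m ⁻¹' {r})).toReal :=
              (ENNReal.toReal_sum (fun r _ => measure_ne_top μ _)).symm
          _ ≤ (1 : ENNReal).toReal := ENNReal.toReal_mono ENNReal.one_ne_top hle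
          _ = 1 := by simp
      have hterm : ∀ r ∈ Finset.Icc 1 n, (μ (A m r)).toReal * (r : ℝ)⁻¹
          ≤ (α / (n : ℝ)) * (μ (BHAux.rho n α P m ⁻¹' {r})).toReal := by
        intro r hr
        obtain ⟨hr1, hrn⟩ := Finset.mem_Icc.mp hr
        have hrpos : (0 : ℝ) < (r : ℝ) := by exact_mod_cast hr1
        have hr0 : (r : ℝ) ≠ 0 := ne_of_gt hrpos
        have ht0 : (0 : ℝ) ≤ (r : ℝ) * α / (n : ℝ) := by positivity
        have ht1 : (r : ℝ) * α / (n : ℝ) ≤ 1 := by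
          have hrn' : (r : ℝ) ≤ (n : ℝ) := by exact_mod_cast hrn
          rw [div_le_one hn0]
          nlinarith
        have hAeq : A m r = (P m ⁻¹' Set.Iic ((r : ℝ) * α / (n : ℝ)))
            ∩ (BHAux.rho n α P m ⁻¹' {r}) := by
          ext ω
          simp [hAdef, Set.mem_setOf_eq, and_comm]
        have hmul : μ (A m r) = μ (P m ⁻¹' Set.Iic ((r : ℝ) * α / (n : ℝ)))
            * μ (BHAux.rho n α P m ⁻¹' {r}) := by
          rw [hAeq]
          exact hind.measure_inter_preimage_eq_mul _ _ measurableSet_Iic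
            (measurableSet_singleton r)
        have hμ1 : (μ (P m ⁻¹' Set.Iic ((r : ℝ) * α / (n : ℝ)))).toReal
            ≤ (r : ℝ) * α / (n : ℝ) := by
          apply ENNReal.toReal_le_of_le_ofReal ht0
          exact hA1 m _ ht0 ht1
        have h2 : (0 : ℝ) ≤ (μ (BHAux.rho n α P m ⁻¹' {r})).toReal := ENNReal.toReal_nonneg
        rw [hmul, ENNReal.toReal_mul]
        calc (μ (P m ⁻¹' Set.Iic ((r : ℝ) * α / (n : ℝ)))).toReal
              * (μ (BHAux.rho n α P m ⁻¹' {r})).toReal * (r : ℝ)⁻¹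
            ≤ ((r : ℝ) * α / (n : ℝ)) * (μ (BHAux.rho n α P m ⁻¹' {r})).toReal * (r : ℝ)⁻¹ := by
              apply mul_le_mul_of_nonneg_right
                (mul_le_mul_of_nonneg_right hμ1 h2) (by positivity)
          _ = (α / (n : ℝ)) * (μ (BHAux.rho n α P m ⁻¹' {r})).toReal := by
              field_simp
      calc ∑ r ∈ Finset.Icc 1 n, (μ (A m r)).toReal * (r : ℝ)⁻¹
          ≤ ∑ r ∈ Finset.Icc 1 n,
            (α / (n : ℝ)) * (μ (BHAux.rho n α P m ⁻¹' {r})).toReal :=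
            Finset.sum_le_sum hterm
        _ = (α / (n : ℝ)) * ∑ r ∈ Finset.Icc 1 n,
            (μ (BHAux.rho n α P m ⁻¹' {r})).toReal := by rw [Finset.mul_sum]
        _ ≤ (α / (n : ℝ)) * 1 := by
            apply mul_le_mul_of_nonneg_left hsum2 (by positivity)
        _ = α / (n : ℝ) := mul_one _
    calc ∑ m : Fin n, ∑ r ∈ Finset.Icc 1 n, (μ (A m r)).toReal * (r : ℝ)⁻¹
        ≤ ∑ _m : Fin n, α / (n : ℝ) := Finset.sum_le_sum (fun m _ => hmb m)
      _ = (n : ℝ) * (α / (n : ℝ)) := by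
          rw [Finset.sum_const, Finset.card_univ, Fintype.card_fin, nsmul_eq_mul]
      _ = α := by field_simp
  calc ∫ ω, (V₁ ω : ℝ) / ((max (R₁ ω) 1 : ℕ) : ℝ) ∂μ
      ≤ ∫ ω, g ω ∂μ := by
        apply integral_mono_of_nonneg (Filter.Eventually.of_forall (fun ω => by positivity))
          hgInt (Filter.Eventually.of_forall key)
    _ ≤ α := hIg
end

section
/- In the key FDR computation, for each true null i and each r ∈ {1,...,n}: Pr_θ(R₁ = r, P_i ≤ rα/n) = Pr_θ(R₁^{(−i)} = r − 1, P_i ≤ rα/n), where R₁^{(−i)} is the number of rejections when applying the stepup procedure with critical values jα/n, j = 2,...,n, to the 2(n−1) p-values excluding the pair (P_i, 1 − P_i). Consequently, under independence and A.1, Σ_{r=1}^n (1/r) Pr_θ(R₁ = r, P_i ≤ rα/n) ≤ α/n. -/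
open MeasureTheory Finset
open scoped Classical

lemma sup_ite_eq_iff (N r : ℕ) (c : ℕ → ℕ) (hr : r ≤ N) :
    ((Finset.range (N+1)).sup fun j => if j ≤ c j then j else 0) = r ↔
      (r ≤ c r ∧ ∀ j, j ≤ N → r < j → c j < j) := by
  constructor
  · intro h
    constructor
    · rcases Nat.eq_zero_or_pos r with h0 | h0
      · simp [h0]
      · obtain ⟨j, hj, hje⟩ := Finset.exists_mem_eq_sup (Finset.range (N+1))
          ⟨0, by simp⟩ (fun j => if j ≤ c j then j else 0)
        rw [h] at hje
        by_cases hc : j ≤ c j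
        · rw [if_pos hc] at hje; rw [hje]; exact hc
        · rw [if_neg hc] at hje; omega
    · intro j hjN hrj
      by_contra hc
      push_neg at hc
      have hmem : j ∈ Finset.range (N+1) := Finset.mem_range.mpr (by omega)
      have hle := Finset.le_sup (f := fun j => if j ≤ c j then j else 0) hmem
      rw [h] at hle
      simp only [if_pos hc] at hle
      omega
  · rintro ⟨h1, h2⟩
    apply le_antisymm
    · apply Finset.sup_le
      intro j hj
      simp only [Finset.mem_range] at hj
      by_cases hjr : j ≤ r
      · split <;> omega
      · have := h2 j (by omega) (by omega)
        rw [if_neg (by omega)]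
        omega
    · have hmem : r ∈ Finset.range (N+1) := Finset.mem_range.mpr (by omega)
      have hle := Finset.le_sup (f := fun j => if j ≤ c j then j else 0) hmem
      simp only [if_pos h1] at hle
      exact hle

lemma key_pointwise (n : ℕ) (hn : 1 ≤ n) (α : ℝ) (hα : 0 < α) (hα1 : α < 1)
    (p : Fin n → ℝ) (pv : Fin n ⊕ Fin n → ℝ)
    (hT : ∀ j, pv (Sum.inl j) = p j) (hF : ∀ j, pv (Sum.inr j) = 1 - p j)
    (i : Fin n) (r : ℕ) (hr1 : 1 ≤ r) (hrn : r ≤ n)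
    (hPi : p i ≤ (r : ℝ) * α / (n : ℝ)) :
    ((Finset.range (n+1)).sup (fun j =>
        if j ≤ (Finset.univ.filter
            (fun k : Fin n ⊕ Fin n => pv k ≤ (j : ℝ) * α / (n : ℝ))).card
          then j else 0) = r
      ↔ (Finset.range n).sup (fun m =>
        if m ≤ ((Finset.univ \ {Sum.inl i, Sum.inr i}).filter
            (fun k : Fin n ⊕ Fin n => pv k ≤ ((m + 1 : ℕ) : ℝ) * α / (n : ℝ))).card
          then m else 0) = r - 1) := by
  have hn0 : (0:ℝ) < (n:ℝ) := by exact_mod_cast hn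
  set c : ℕ → ℕ := fun j => (Finset.univ.filter
      (fun k : Fin n ⊕ Fin n => pv k ≤ (j : ℝ) * α / (n : ℝ))).card with hc
  set c' : ℕ → ℕ := fun m => ((Finset.univ \ ({Sum.inl i, Sum.inr i} : Finset (Fin n ⊕ Fin n))).filter
      (fun k : Fin n ⊕ Fin n => pv k ≤ ((m + 1 : ℕ) : ℝ) * α / (n : ℝ))).card with hc'
  have hmono : ∀ j j' : ℕ, j ≤ j' → (j : ℝ) * α / (n : ℝ) ≤ (j' : ℝ) * α / (n : ℝ) := by
    intro j j' hjj
    have h : (j:ℝ) ≤ (j':ℝ) := by exact_mod_cast hjj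
    gcongr
  have hnn : (n : ℝ) * α / (n : ℝ) = α := by field_simp
  rw [sup_ite_eq_iff n r c hrn]
  rw [show Finset.range n = Finset.range ((n-1)+1) from by rw [Nat.sub_add_cancel hn]]
  rw [sup_ite_eq_iff (n-1) (r-1) c' (by omega)]
  by_cases hcase : 1 - p i ≤ α
  · -- both P_i and 1-P_i small: everything is rejected, both sides iff r = n
    have hra : (r:ℝ) * α / (n:ℝ) ≤ α := by
      have := hmono r n hrn; rwa [hnn] at this
    have hhalf : (1:ℝ) ≤ 2 * α := by linarith
    have hcn : n ≤ c n := by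
      have hcard : (Finset.univ : Finset (Fin n)).card ≤ (Finset.univ.filter
          (fun k : Fin n ⊕ Fin n => pv k ≤ (n:ℝ) * α / (n:ℝ))).card := by
        apply Finset.card_le_card_of_injOn (fun k => if p k ≤ α then Sum.inl k else Sum.inr k)
        · intro a _
          simp only [Finset.mem_coe, Finset.mem_filter, Finset.mem_univ, true_and]
          by_cases hpa : p a ≤ α
          · rw [if_pos hpa, hT, hnn]; exact hpa
          · rw [if_neg hpa, hF, hnn]; push_neg at hpa; linarith
        · intro a _ b _ hab
          by_cases ha : p a ≤ α <;> by_cases hb : p b ≤ α <;>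
            simp only [ha, hb, if_true, if_false, ite_true, ite_false] at hab <;>
            first
              | exact Sum.inl.inj hab
              | exact Sum.inr.inj hab
              | exact absurd hab (by simp)
      simpa [Finset.card_univ] using hcard
    have hcn' : n - 1 ≤ c' (n-1) := by
      have hcard : ((Finset.univ : Finset (Fin n)).erase i).card ≤
          ((Finset.univ \ ({Sum.inl i, Sum.inr i} : Finset (Fin n ⊕ Fin n))).filter
          (fun k : Fin n ⊕ Fin n => pv k ≤ ((n-1+1 : ℕ):ℝ) * α / (n:ℝ))).card := by
        apply Finset.card_le_card_of_injOn (fun k => if p k ≤ α then Sum.inl k else Sum.inr k)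
        · intro a ha
          have hai : a ≠ i := Finset.ne_of_mem_erase ha
          have hth : ((n-1+1 : ℕ):ℝ) * α / (n:ℝ) = α := by
            rw [Nat.sub_add_cancel hn, hnn]
          simp only [Finset.mem_coe, Finset.mem_filter, Finset.mem_sdiff, Finset.mem_univ, true_and,
            Finset.mem_insert, Finset.mem_singleton, hth]
          by_cases hpa : p a ≤ α
          · rw [if_pos hpa]
            refine ⟨by simp [hai], ?_⟩
            rw [hT]; exact hpa
          · rw [if_neg hpa]
            refine ⟨by simp [hai], ?_⟩
            rw [hF]; push_neg at hpa; linarith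
        · intro a _ b _ hab
          by_cases ha : p a ≤ α <;> by_cases hb : p b ≤ α <;>
            simp only [ha, hb, if_true, if_false, ite_true, ite_false] at hab <;>
            first
              | exact Sum.inl.inj hab
              | exact Sum.inr.inj hab
              | exact absurd hab (by simp)
      have hce : ((Finset.univ : Finset (Fin n)).erase i).card = n - 1 := by
        rw [Finset.card_erase_of_mem (Finset.mem_univ i), Finset.card_univ, Fintype.card_fin]
      rw [hce] at hcard
      exact hcard
    constructor
    · rintro ⟨h1, h2⟩
      have hreq : r = n := by
        by_contra hne
        have := h2 n le_rfl (by omega)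
        omega
      exact ⟨by rw [hreq]; exact hcn', by intro m hm hrm; omega⟩
    · rintro ⟨h1, h2⟩
      have hreq : r = n := by
        by_contra hne
        have := h2 (n-1) le_rfl (by omega)
        omega
      exact ⟨by rw [hreq]; exact hcn, by intro j hj hrj; omega⟩
  · -- 1 - p i > α : the pair contributes exactly one rejection at each level ≥ r
    have hpair : ∀ m, r ≤ m + 1 → m + 1 ≤ n → c (m+1) = c' m + 1 := by
      intro m h1 h2
      have hqi : pv (Sum.inl i) ≤ ((m+1 : ℕ):ℝ) * α / (n:ℝ) := by
        rw [hT]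
        exact le_trans hPi (hmono r (m+1) h1)
      have hqni : ¬ (pv (Sum.inr i) ≤ ((m+1 : ℕ):ℝ) * α / (n:ℝ)) := by
        rw [hF]
        intro hcon
        apply hcase
        calc 1 - p i ≤ ((m+1:ℕ):ℝ) * α / (n:ℝ) := hcon
          _ ≤ (n:ℝ) * α / (n:ℝ) := hmono (m+1) n h2
          _ = α := hnn
      have hsplit : (Finset.univ.filter
          (fun k : Fin n ⊕ Fin n => pv k ≤ ((m+1:ℕ) : ℝ) * α / (n : ℝ))) =
          ((Finset.univ \ ({Sum.inl i, Sum.inr i} : Finset (Fin n ⊕ Fin n))).filter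
          (fun k => pv k ≤ ((m+1:ℕ) : ℝ) * α / (n : ℝ))) ∪
          (({Sum.inl i, Sum.inr i} : Finset (Fin n ⊕ Fin n)).filter
          (fun k => pv k ≤ ((m+1:ℕ) : ℝ) * α / (n : ℝ))) := by
        rw [← Finset.filter_union, Finset.sdiff_union_of_subset (Finset.subset_univ _)]
      have hpairset : (({Sum.inl i, Sum.inr i} : Finset (Fin n ⊕ Fin n)).filter
          (fun k => pv k ≤ ((m+1:ℕ) : ℝ) * α / (n : ℝ))) = {Sum.inl i} := by
        ext k
        simp only [Finset.mem_filter, Finset.mem_insert, Finset.mem_singleton]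
        constructor
        · rintro ⟨hk | hk, hle⟩
          · exact hk
          · rw [hk] at hle; exact absurd hle hqni
        · rintro hk
          rw [hk]
          exact ⟨Or.inl rfl, hqi⟩
      have hceq : c (m+1) = (((Finset.univ \ ({Sum.inl i, Sum.inr i} : Finset (Fin n ⊕ Fin n))).filter
          (fun k => pv k ≤ ((m+1:ℕ) : ℝ) * α / (n : ℝ))) ∪ {Sum.inl i}).card := by
        rw [hc]
        simp only
        rw [← hpairset, ← hsplit]
      rw [hceq, Finset.card_union_of_disjoint, Finset.card_singleton, hc']
      simp only [Finset.disjoint_singleton_right, Finset.mem_filter, Finset.mem_sdiff]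
      intro hcon
      exact hcon.1.2 (by simp)
    constructor
    · rintro ⟨h1, h2⟩
      constructor
      · have := hpair (r-1) (by omega) (by omega)
        rw [show r-1+1 = r from by omega] at this
        omega
      · intro m hm hrm
        have hp := hpair m (by omega) (by omega)
        have := h2 (m+1) (by omega) (by omega)
        omega
    · rintro ⟨h1, h2⟩
      constructor
      · have := hpair (r-1) (by omega) (by omega)
        rw [show r-1+1 = r from by omega] at this
        omega
      · intro j hj hrj
        have h2' := h2 (j-1) (by omega) (by omega)
        have hp := hpair (j-1) (by omega) (by omega)
        rw [show j-1+1 = j from by omega] at hp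
        omega

lemma measurable_finset_sup_nat {X : Type*} [MeasurableSpace X] (s : Finset ℕ) (f : ℕ → X → ℕ)
    (hf : ∀ j, Measurable (f j)) : Measurable fun x => s.sup (fun j => f j x) := by
  classical
  induction s using Finset.induction_on with
  | empty => simp
  | @insert a s ha ih =>
    have he : (fun x => (insert a s).sup fun j => f j x)
        = fun x => max (f a x) (s.sup fun j => f j x) := by
      funext x
      rw [Finset.sup_insert]
    rw [he]
    exact (measurable_of_countable (Function.uncurry max)).comp ((hf a).prodMk ih)


noncomputable def Qaux {n : ℕ} (i : Fin n) (k : Fin n ⊕ Fin n)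
    (v : ↥(Finset.univ.erase i) → ℝ) : ℝ :=
  Sum.elim
    (fun j => if h : j ∈ Finset.univ.erase i then v ⟨j, h⟩ else 0)
    (fun j => if h : j ∈ Finset.univ.erase i then 1 - v ⟨j, h⟩ else 0) k

lemma Qaux_measurable {n : ℕ} (i : Fin n) (k : Fin n ⊕ Fin n) :
    Measurable (Qaux i k) := by
  cases k with
  | inl j =>
    by_cases h : j ∈ Finset.univ.erase i
    · have he : Qaux i (Sum.inl j) = fun v : ↥(Finset.univ.erase i) → ℝ => v ⟨j, h⟩ := by
        funext v
        show (if h' : j ∈ Finset.univ.erase i then v ⟨j, h'⟩ else 0) = v ⟨j, h⟩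
        rw [dif_pos h]
      rw [he]
      exact measurable_pi_apply _
    · have he : Qaux i (Sum.inl j) = fun _ : ↥(Finset.univ.erase i) → ℝ => (0:ℝ) := by
        funext v
        show (if h' : j ∈ Finset.univ.erase i then v ⟨j, h'⟩ else 0) = 0
        rw [dif_neg h]
      rw [he]
      exact measurable_const
  | inr j =>
    by_cases h : j ∈ Finset.univ.erase i
    · have he : Qaux i (Sum.inr j) = fun v : ↥(Finset.univ.erase i) → ℝ => 1 - v ⟨j, h⟩ := by
        funext v
        show (if h' : j ∈ Finset.univ.erase i then 1 - v ⟨j, h'⟩ else 0) = 1 - v ⟨j, h⟩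
        rw [dif_pos h]
      rw [he]
      exact measurable_const.sub (measurable_pi_apply _)
    · have he : Qaux i (Sum.inr j) = fun _ : ↥(Finset.univ.erase i) → ℝ => (0:ℝ) := by
        funext v
        show (if h' : j ∈ Finset.univ.erase i then 1 - v ⟨j, h'⟩ else 0) = 0
        rw [dif_neg h]
      rw [he]
      exact measurable_const

noncomputable def phiaux {n : ℕ} (α : ℝ) (i : Fin n)
    (v : ↥(Finset.univ.erase i) → ℝ) : ℕ :=
  (Finset.range n).sup (fun m =>
    if m ≤ ((Finset.univ \ ({Sum.inl i, Sum.inr i} : Finset (Fin n ⊕ Fin n))).filter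
        (fun k => Qaux i k v ≤ ((m + 1 : ℕ) : ℝ) * α / (n : ℝ))).card then m else 0)

lemma phiaux_measurable {n : ℕ} (α : ℝ) (i : Fin n) :
    Measurable (phiaux α i) := by
  apply measurable_finset_sup_nat
  intro m
  have hm : Measurable (fun v : ↥(Finset.univ.erase i) → ℝ =>
      ((Finset.univ \ ({Sum.inl i, Sum.inr i} : Finset (Fin n ⊕ Fin n))).filter
      (fun k => Qaux i k v ≤ ((m + 1 : ℕ) : ℝ) * α / (n : ℝ))).card) := by
    have he : (fun v : ↥(Finset.univ.erase i) → ℝ =>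
        ((Finset.univ \ ({Sum.inl i, Sum.inr i} : Finset (Fin n ⊕ Fin n))).filter
        (fun k => Qaux i k v ≤ ((m + 1 : ℕ) : ℝ) * α / (n : ℝ))).card)
        = fun v => ∑ k ∈ Finset.univ \ ({Sum.inl i, Sum.inr i} : Finset (Fin n ⊕ Fin n)),
          if Qaux i k v ≤ ((m + 1 : ℕ) : ℝ) * α / (n : ℝ) then 1 else 0 := by
      funext v; rw [Finset.card_filter]
    rw [he]
    exact Finset.measurable_sum _ fun k _ =>
      Measurable.ite (measurableSet_le (Qaux_measurable i k) measurable_const)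
        measurable_const measurable_const
  exact Measurable.ite (hm ((Set.to_countable {x : ℕ | m ≤ x}).measurableSet))
    measurable_const measurable_const

/-- Key FDR computation.  For each true null i and r ∈ {1,…,n}:
Pr_θ(R₁ = r, Pᵢ ≤ rα/n) = Pr_θ(R₁⁽⁻ⁱ⁾ = r − 1, Pᵢ ≤ rα/n), where R₁⁽⁻ⁱ⁾ is the
number of rejections of the stepup procedure with critical values jα/n,
j = 2,…,n, applied to the 2(n−1) p-values excluding the pair (Pᵢ, 1 − Pᵢ).
Consequently, under independence and A.1,
Σ_{r=1}^n (1/r) Pr_θ(R₁ = r, Pᵢ ≤ rα/n) ≤ α/n. -/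
theorem bh_fdr_key_lemma
    {Ω : Type*} [MeasurableSpace Ω] (μ : Measure Ω) [IsProbabilityMeasure μ]
    (n : ℕ) (hn : 1 ≤ n) (α : ℝ) (hα : 0 < α) (hα1 : α < 1)
    (θ : Fin n → ℝ) (P : Fin n → Ω → ℝ)
    (hmeas : ∀ i, Measurable (P i))
    (hA1 : ∀ i, ∀ p : ℝ, 0 ≤ p → p ≤ 1 →
      μ {ω | P i ω ≤ p} ≤ ENNReal.ofReal p)
    (hA3 : ProbabilityTheory.iIndepFun P μ)
    (pval : (Fin n ⊕ Fin n) → Ω → ℝ)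
    (hpvalT : ∀ i, pval (Sum.inl i) = P i)
    (hpvalF : ∀ i ω, pval (Sum.inr i) ω = 1 - P i ω)
    -- the stepup index of the full procedure, which equals the number R₁ of
    -- rejections: R₁ = max{i ≤ n : #{k : p_k ≤ iα/n} ≥ i}
    (R₁ : Ω → ℕ)
    (hR₁ : ∀ ω, R₁ ω = (Finset.range (n + 1)).sup (fun i =>
      if i ≤ (Finset.univ.filter
          (fun k : Fin n ⊕ Fin n => pval k ω ≤ (i : ℝ) * α / (n : ℝ))).card
        then i else 0))
    -- the reduced stepup procedure dropping the pair (i, n+i), with critical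
    -- values (m+1)α/n for m = 1,…,n−1
    (Rminus : Fin n → Ω → ℕ)
    (hRminus : ∀ i ω, Rminus i ω = (Finset.range n).sup (fun m =>
      if m ≤ ((Finset.univ \ {Sum.inl i, Sum.inr i}).filter
          (fun k : Fin n ⊕ Fin n =>
            pval k ω ≤ ((m + 1 : ℕ) : ℝ) * α / (n : ℝ))).card
        then m else 0))
    (i : Fin n) :
    (∀ r : ℕ, 1 ≤ r → r ≤ n →
      μ {ω | R₁ ω = r ∧ P i ω ≤ (r : ℝ) * α / (n : ℝ)} =
        μ {ω | Rminus i ω = r - 1 ∧ P i ω ≤ (r : ℝ) * α / (n : ℝ)}) ∧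
    ∑ r ∈ Finset.Icc 1 n, (1 / (r : ℝ)) *
        (μ {ω | R₁ ω = r ∧ P i ω ≤ (r : ℝ) * α / (n : ℝ)}).toReal ≤
      α / (n : ℝ) := by
  have hn0 : (0:ℝ) < (n:ℝ) := by exact_mod_cast hn
  -- Part 1 : pointwise set equality
  have part1 : ∀ r : ℕ, 1 ≤ r → r ≤ n →
      {ω | R₁ ω = r ∧ P i ω ≤ (r : ℝ) * α / (n : ℝ)} =
      {ω | Rminus i ω = r - 1 ∧ P i ω ≤ (r : ℝ) * α / (n : ℝ)} := by
    intro r hr1 hrn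
    ext ω
    simp only [Set.mem_setOf_eq]
    constructor
    · rintro ⟨h1, h2⟩
      refine ⟨?_, h2⟩
      have hiff := key_pointwise n hn α hα hα1 (fun j => P j ω) (fun k => pval k ω)
        (fun j => by show pval (Sum.inl j) ω = P j ω; rw [hpvalT])
        (fun j => hpvalF j ω) i r hr1 hrn h2
      exact (hRminus i ω).trans (hiff.mp ((hR₁ ω).symm.trans h1))
    · rintro ⟨h1, h2⟩
      refine ⟨?_, h2⟩
      have hiff := key_pointwise n hn α hα hα1 (fun j => P j ω) (fun k => pval k ω)
        (fun j => by show pval (Sum.inl j) ω = P j ω; rw [hpvalT])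
        (fun j => hpvalF j ω) i r hr1 hrn h2
      exact (hR₁ ω).trans (hiff.mpr ((hRminus i ω).symm.trans h1))
  -- measurability of the p-values
  have hpvmeas : ∀ k : Fin n ⊕ Fin n, Measurable (pval k) := by
    intro k
    cases k with
    | inl j =>
      have := hmeas j
      rwa [← hpvalT j] at this
    | inr j =>
      have he : pval (Sum.inr j) = fun ω => 1 - P j ω := funext (hpvalF j)
      rw [he]
      exact measurable_const.sub (hmeas j)
  have hcardmeas : ∀ (s : Finset (Fin n ⊕ Fin n)) (t : ℝ),
      Measurable (fun ω => (s.filter (fun k => pval k ω ≤ t)).card) := by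
    intro s t
    have he : (fun ω => (s.filter (fun k => pval k ω ≤ t)).card)
        = fun ω => ∑ k ∈ s, if pval k ω ≤ t then 1 else 0 := by
      funext ω; rw [Finset.card_filter]
    rw [he]
    exact Finset.measurable_sum _ fun k _ =>
      Measurable.ite (measurableSet_le (hpvmeas k) measurable_const)
        measurable_const measurable_const
  have hRmmeas : Measurable (Rminus i) := by
    have he : Rminus i = fun ω => (Finset.range n).sup (fun m =>
        if m ≤ ((Finset.univ \ {Sum.inl i, Sum.inr i}).filter
            (fun k : Fin n ⊕ Fin n =>
              pval k ω ≤ ((m + 1 : ℕ) : ℝ) * α / (n : ℝ))).card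
          then m else 0) := funext (hRminus i)
    rw [he]
    apply measurable_finset_sup_nat
    intro m
    apply Measurable.ite ?_ measurable_const measurable_const
    exact hcardmeas (Finset.univ \ {Sum.inl i, Sum.inr i}) (((m+1 : ℕ):ℝ) * α / (n:ℝ))
      ((Set.to_countable {x : ℕ | m ≤ x}).measurableSet)
  -- independence of Rminus i and P i
  have hindep : ProbabilityTheory.IndepFun (Rminus i) (P i) μ := by
    classical
    have hdisj : Disjoint ({i} : Finset (Fin n)) (Finset.univ.erase i) := by
      simp
    have h0 := hA3.indepFun_finset {i} (Finset.univ.erase i) hdisj hmeas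
    have h1 := h0.comp (φ := fun v : (↥({i} : Finset (Fin n)) → ℝ) =>
      v ⟨i, Finset.mem_singleton_self i⟩) (ψ := phiaux α i)
      (measurable_pi_apply _ : Measurable fun v : (↥({i} : Finset (Fin n)) → ℝ) =>
        v ⟨i, Finset.mem_singleton_self i⟩) (phiaux_measurable α i)
    have e2 : phiaux α i ∘ (fun ω (j : ↥(Finset.univ.erase i)) => P (↑j) ω) = Rminus i := by
      funext ω
      show phiaux α i (fun j : ↥(Finset.univ.erase i) => P (↑j) ω) = Rminus i ω
      rw [hRminus i ω]
      simp only [phiaux]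
      apply Finset.sup_congr rfl
      intro m _
      have hfe : ((Finset.univ \ ({Sum.inl i, Sum.inr i} : Finset (Fin n ⊕ Fin n))).filter
            (fun k => Qaux i k (fun j : ↥(Finset.univ.erase i) => P (↑j) ω) ≤
              ((m + 1 : ℕ) : ℝ) * α / (n : ℝ))) =
          ((Finset.univ \ ({Sum.inl i, Sum.inr i} : Finset (Fin n ⊕ Fin n))).filter
            (fun k => pval k ω ≤ ((m + 1 : ℕ) : ℝ) * α / (n : ℝ))) := by
        apply Finset.filter_congr
        intro k hk
        simp only [Finset.mem_sdiff, Finset.mem_insert, Finset.mem_singleton] at hk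
        cases k with
        | inl j =>
          have hji : j ≠ i := by
            intro hji
            exact hk.2 (Or.inl (by rw [hji]))
          have hj : j ∈ Finset.univ.erase i := by simp [hji]
          rw [show Qaux i (Sum.inl j) (fun j : ↥(Finset.univ.erase i) => P (↑j) ω)
              = P j ω from by
            show (if h : j ∈ Finset.univ.erase i then
              P (↑(⟨j, h⟩ : ↥(Finset.univ.erase i))) ω else 0) = P j ω
            rw [dif_pos hj], hpvalT]
        | inr j =>
          have hji : j ≠ i := by
            intro hji
            exact hk.2 (Or.inr (by rw [hji]))
          have hj : j ∈ Finset.univ.erase i := by simp [hji]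
          rw [show Qaux i (Sum.inr j) (fun j : ↥(Finset.univ.erase i) => P (↑j) ω)
              = 1 - P j ω from by
            show (if h : j ∈ Finset.univ.erase i then
              1 - P (↑(⟨j, h⟩ : ↥(Finset.univ.erase i))) ω else 0) = 1 - P j ω
            rw [dif_pos hj], hpvalF]
      rw [hfe]
    have h2 : ProbabilityTheory.IndepFun (P i) (Rminus i) μ := e2 ▸ h1
    exact h2.symm
  refine ⟨fun r hr1 hrn => by rw [part1 r hr1 hrn], ?_⟩
  -- the summand bound
  have hbound : ∀ r ∈ Finset.Icc 1 n, (1 / (r:ℝ)) *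
      (μ {ω | R₁ ω = r ∧ P i ω ≤ (r : ℝ) * α / (n : ℝ)}).toReal ≤
      (μ ((Rminus i) ⁻¹' {r - 1})).toReal * (α / (n:ℝ)) := by
    intro r hr
    rw [Finset.mem_Icc] at hr
    obtain ⟨hr1, hrn⟩ := hr
    have hr0 : (0:ℝ) < (r:ℝ) := by exact_mod_cast hr1
    have ht0 : (0:ℝ) ≤ (r:ℝ) * α / (n:ℝ) := by positivity
    have ht1 : (r:ℝ) * α / (n:ℝ) ≤ 1 := by
      have hrl : (r:ℝ) * α / (n:ℝ) ≤ (n:ℝ) * α / (n:ℝ) := by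
        have hcast : (r:ℝ) ≤ (n:ℝ) := by exact_mod_cast hrn
        gcongr
      have : (n:ℝ) * α / (n:ℝ) = α := by field_simp
      linarith
    have hseteq : {ω | Rminus i ω = r - 1 ∧ P i ω ≤ (r : ℝ) * α / (n : ℝ)} =
        (Rminus i) ⁻¹' {r - 1} ∩ (P i) ⁻¹' (Set.Iic ((r : ℝ) * α / (n : ℝ))) := by
      ext ω
      simp [Set.mem_setOf_eq, Set.mem_Iic, Set.mem_preimage]
    rw [part1 r hr1 hrn, hseteq,
      hindep.measure_inter_preimage_eq_mul {r-1} (Set.Iic ((r : ℝ) * α / (n : ℝ)))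
        (measurableSet_singleton _) measurableSet_Iic]
    have hB : μ ((P i) ⁻¹' (Set.Iic ((r : ℝ) * α / (n : ℝ)))) ≤
        ENNReal.ofReal ((r : ℝ) * α / (n : ℝ)) := hA1 i _ ht0 ht1
    have hBr : (μ ((P i) ⁻¹' (Set.Iic ((r : ℝ) * α / (n : ℝ))))).toReal ≤
        (r : ℝ) * α / (n : ℝ) := by
      have := ENNReal.toReal_mono ENNReal.ofReal_ne_top hB
      rwa [ENNReal.toReal_ofReal ht0] at this
    rw [ENNReal.toReal_mul]
    calc (1/(r:ℝ)) * ((μ ((Rminus i) ⁻¹' {r - 1})).toReal *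
          (μ ((P i) ⁻¹' (Set.Iic ((r : ℝ) * α / (n : ℝ))))).toReal)
        ≤ (1/(r:ℝ)) * ((μ ((Rminus i) ⁻¹' {r - 1})).toReal * ((r : ℝ) * α / (n : ℝ))) := by
          apply mul_le_mul_of_nonneg_left
            (mul_le_mul_of_nonneg_left hBr ENNReal.toReal_nonneg) (by positivity)
      _ = (μ ((Rminus i) ⁻¹' {r - 1})).toReal * (α / (n:ℝ)) := by
          field_simp
  calc ∑ r ∈ Finset.Icc 1 n, (1 / (r : ℝ)) *
        (μ {ω | R₁ ω = r ∧ P i ω ≤ (r : ℝ) * α / (n : ℝ)}).toReal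
      ≤ ∑ r ∈ Finset.Icc 1 n, (μ ((Rminus i) ⁻¹' {r - 1})).toReal * (α / (n:ℝ)) :=
        Finset.sum_le_sum hbound
    _ = (∑ r ∈ Finset.Icc 1 n, (μ ((Rminus i) ⁻¹' {r - 1})).toReal) * (α / (n:ℝ)) := by
        rw [← Finset.sum_mul]
    _ ≤ 1 * (α / (n:ℝ)) := by
        apply mul_le_mul_of_nonneg_right ?_ (by positivity)
        have hdisj2 : (↑(Finset.Icc 1 n) : Set ℕ).PairwiseDisjoint
            (fun r => (Rminus i) ⁻¹' {r-1}) := by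
          intro a ha b hb hab
          simp only [Finset.coe_Icc, Set.mem_Icc] at ha hb
          refine Set.disjoint_left.mpr ?_
          intro x hxa hxb
          simp only [Set.mem_preimage, Set.mem_singleton_iff] at hxa hxb
          omega
        have hmeasA : ∀ r ∈ Finset.Icc 1 n, MeasurableSet ((Rminus i) ⁻¹' {r-1}) :=
          fun r _ => hRmmeas (measurableSet_singleton _)
        have hsum := measure_biUnion_finset (μ := μ) hdisj2 hmeasA
        rw [← ENNReal.toReal_sum (fun r _ => measure_ne_top μ _), ← hsum]
        have hle : μ (⋃ r ∈ Finset.Icc 1 n, (Rminus i) ⁻¹' {r-1}) ≤ 1 := prob_le_one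
        have hto := ENNReal.toReal_mono (by simp : (1 : ENNReal) ≠ ⊤) hle
        simpa using hto
    _ = α / (n:ℝ) := one_mul _
end

section
/- In a stepdown procedure applied to the 2n hypotheses with P_{n+i} = 1 − P_i, if all n false nulls are among the rejected hypotheses (J = n rejections among false nulls at their critical values), and the critical values satisfy α_i < 1/2 for all i, then the event that some true null is falsely rejected is the union over subsets S ⊆ I₁ of the events {K = S, min over true nulls not paired with S of P_i ≤ α_{|S|+1}}, where K denotes the set of false nulls rejected by the stepdown procedure restricted to the false nulls. -/
open MeasureTheory Finset
open scoped Classical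

open Finset
open scoped Classical

private lemma sup_stepdown_spec (n : ℕ) (C : ℕ → ℕ) (s : ℕ)
    (hs : s = (Finset.range (n + 1)).sup (fun i =>
      if ∀ j ∈ Finset.Icc 1 i, j ≤ C j then i else 0)) :
    s ≤ n ∧ (∀ j, 1 ≤ j → j ≤ s → j ≤ C j) ∧
      (∀ i, i ≤ n → (∀ j ∈ Finset.Icc 1 i, j ≤ C j) → i ≤ s) := by
  refine ⟨?_, ?_, ?_⟩
  · rw [hs]
    apply Finset.sup_le
    intro i hi
    simp only [Finset.mem_range] at hi
    split <;> omega
  · obtain ⟨b, hb, hfb⟩ := Finset.exists_mem_eq_sup (Finset.range (n+1))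
      ⟨0, by simp⟩ (fun i => if ∀ j ∈ Finset.Icc 1 i, j ≤ C j then i else 0)
    intro j h1 h2
    rw [hs, hfb] at h2
    by_cases hc : ∀ j ∈ Finset.Icc 1 b, j ≤ C j
    · rw [if_pos hc] at h2
      exact hc j (Finset.mem_Icc.mpr ⟨h1, h2⟩)
    · rw [if_neg hc] at h2; omega
  · intro i hin hcond
    rw [hs]
    have hm : i ∈ Finset.range (n+1) := by simp; omega
    have := Finset.le_sup (f := fun i => if ∀ j ∈ Finset.Icc 1 i, j ≤ C j then i else 0) hm
    beta_reduce at this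
    rw [if_pos hcond] at this
    exact this


/-- For a stepdown procedure with critical constants
α₁ ≤ … ≤ αₙ < 1/2 applied to the 2n p-values (true nulls Pᵢ, false nulls
1 − Pᵢ), the event E₁ that some true null is falsely rejected equals the union
over subsets S ⊆ I₁ of the events {K = S, min_{i ∈ S̄₋ₙ} Pᵢ ≤ α_{|S|+1}},
where K is the rejection set of the stepdown procedure run only on the false
null p-values and S̄₋ₙ indexes the true nulls not paired with S. -/
theorem stepdown_directional_error_event_decomposition
    {Ω : Type*} (n : ℕ) (hn : 1 ≤ n)
    (P : Fin n → Ω → ℝ)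
    (hrange : ∀ i ω, 0 ≤ P i ω ∧ P i ω ≤ 1)
    (pval : (Fin n ⊕ Fin n) → Ω → ℝ)
    (hpvalT : ∀ i, pval (Sum.inl i) = P i)
    (hpvalF : ∀ i ω, pval (Sum.inr i) ω = 1 - P i ω)
    (crit : ℕ → ℝ)
    (hmono : ∀ j k, 1 ≤ j → j ≤ k → k ≤ n → crit j ≤ crit k)
    (hpos : ∀ j, 1 ≤ j → j ≤ n → 0 < crit j)
    (hhalf : ∀ j, 1 ≤ j → j ≤ n → crit j < 1 / 2)
    -- i* of the stepdown procedure applied to all 2n p-values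
    (istar : Ω → ℕ)
    (histar : ∀ ω, istar ω = (Finset.range (n + 1)).sup (fun i =>
      if ∀ j ∈ Finset.Icc 1 i,
          j ≤ (Finset.univ.filter
            (fun k : Fin n ⊕ Fin n => pval k ω ≤ crit j)).card
        then i else 0))
    -- J = number of rejections of the stepdown procedure run only on the n
    -- false null p-values 1 − Pₖ
    (J : Ω → ℕ)
    (hJ : ∀ ω, J ω = (Finset.range (n + 1)).sup (fun i =>
      if ∀ j ∈ Finset.Icc 1 i,
          j ≤ (Finset.univ.filter
            (fun k : Fin n => 1 - P k ω ≤ crit j)).card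
        then i else 0))
    -- K = the corresponding rejection set among the false nulls
    (K : Ω → Finset (Fin n))
    (hK : ∀ ω, K ω = Finset.univ.filter
      (fun k : Fin n => 1 ≤ J ω ∧ 1 - P k ω ≤ crit (J ω))) :
    {ω | ∃ i : Fin n, 1 ≤ istar ω ∧ P i ω ≤ crit (istar ω)} =
      ⋃ S : Finset (Fin n),
        {ω | K ω = S ∧ ∃ i ∈ Finset.univ \ S, P i ω ≤ crit (S.card + 1)} := by

  ext ω
  simp only [Set.mem_setOf_eq, Set.mem_iUnion]
  obtain ⟨hIle, hIcond, hImax⟩ := sup_stepdown_spec n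
    (fun j => (Finset.univ.filter (fun k : Fin n ⊕ Fin n => pval k ω ≤ crit j)).card)
    (istar ω) (histar ω)
  obtain ⟨hJle, hJcond, hJmax⟩ := sup_stepdown_spec n
    (fun j => (Finset.univ.filter (fun k : Fin n => 1 - P k ω ≤ crit j)).card)
    (J ω) (hJ ω)
  have hIcond' : ∀ j, 1 ≤ j → j ≤ istar ω →
      j ≤ (Finset.univ.filter (fun k : Fin n ⊕ Fin n => pval k ω ≤ crit j)).card := hIcond
  have hJcond' : ∀ j, 1 ≤ j → j ≤ J ω →
      j ≤ (Finset.univ.filter (fun k : Fin n => 1 - P k ω ≤ crit j)).card := hJcond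
  have hMsplit : ∀ j, (Finset.univ.filter (fun k : Fin n ⊕ Fin n => pval k ω ≤ crit j)).card
      = (Finset.univ.filter (fun k : Fin n => P k ω ≤ crit j)).card
        + (Finset.univ.filter (fun k : Fin n => 1 - P k ω ≤ crit j)).card := by
    intro j
    rw [Finset.card_filter, Finset.card_filter, Finset.card_filter, Fintype.sum_sum_type]
    simp [hpvalT, hpvalF]
  have hNmono : ∀ j k, 1 ≤ j → j ≤ k → k ≤ n →
      (Finset.univ.filter (fun m : Fin n => 1 - P m ω ≤ crit j)).card ≤
      (Finset.univ.filter (fun m : Fin n => 1 - P m ω ≤ crit k)).card := by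
    intro j k h1 h2 h3
    apply Finset.card_le_card
    intro x hx
    simp only [Finset.mem_filter, Finset.mem_univ, true_and] at hx ⊢
    exact hx.trans (hmono j k h1 h2 h3)
  have hNle : J ω < n → (Finset.univ.filter
      (fun k : Fin n => 1 - P k ω ≤ crit (J ω + 1))).card ≤ J ω := by
    intro hlt
    by_contra hc
    push_neg at hc
    have := hJmax (J ω + 1) (by omega) ?_
    · omega
    intro j hj
    rw [Finset.mem_Icc] at hj
    by_cases hje : j = J ω + 1
    · subst hje; omega
    · exact hJcond' j hj.1 (by omega)
  have hKcard : (K ω).card = J ω := by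
    rcases Nat.eq_zero_or_pos (J ω) with h0 | hpos'
    · rw [hK ω]
      simp [h0]
    · have hKeq : K ω = Finset.univ.filter (fun k => 1 - P k ω ≤ crit (J ω)) := by
        rw [hK ω]
        apply Finset.filter_congr
        intro x _
        exact and_iff_right hpos'
      rw [hKeq]
      have hge := hJcond' (J ω) hpos' le_rfl
      have hle' : (Finset.univ.filter (fun k : Fin n => 1 - P k ω ≤ crit (J ω))).card ≤ J ω := by
        rcases lt_or_eq_of_le hJle with hlt | heq
        · exact le_trans (hNmono (J ω) (J ω + 1) hpos' (by omega) (by omega)) (hNle hlt)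
        · have := Finset.card_filter_le Finset.univ (fun k : Fin n => 1 - P k ω ≤ crit (J ω))
          simp only [Finset.card_univ, Fintype.card_fin] at this
          omega
      omega
  constructor
  · rintro ⟨i, h1i, h2i⟩
    have histn : istar ω ≤ n := hIle
    have hh2 : crit (istar ω) < 1 / 2 := hhalf _ h1i histn
    by_cases hJn : J ω = n
    · exfalso
      have hge := hJcond' n hn (by omega)
      have hcard : (Finset.univ.filter (fun k : Fin n => 1 - P k ω ≤ crit n)).card = n := by
        have := Finset.card_filter_le Finset.univ (fun k : Fin n => 1 - P k ω ≤ crit n)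
        simp only [Finset.card_univ, Fintype.card_fin] at this
        omega
      have huniv : (Finset.univ.filter (fun k : Fin n => 1 - P k ω ≤ crit n)) = Finset.univ :=
        Finset.eq_univ_of_card _ (by rw [hcard, Fintype.card_fin])
      have hi : i ∈ Finset.univ.filter (fun k : Fin n => 1 - P k ω ≤ crit n) := by
        rw [huniv]; exact Finset.mem_univ i
      rw [Finset.mem_filter] at hi
      have := hhalf n hn le_rfl
      linarith [hi.2]
    · have hJlt : J ω < n := lt_of_le_of_ne hJle hJn
      have hnotK : ∀ i' : Fin n, P i' ω ≤ crit (istar ω) ∨ P i' ω ≤ crit (J ω + 1) →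
          i' ∉ K ω := by
        intro i' hpi' hmem
        rw [hK ω, Finset.mem_filter] at hmem
        obtain ⟨-, h1J, h2J⟩ := hmem
        have h3 := hhalf (J ω) h1J (by omega)
        have h4 := hhalf (J ω + 1) (by omega) (by omega)
        rcases hpi' with h | h <;> linarith
      by_cases hcase : istar ω ≤ J ω + 1
      · refine ⟨K ω, rfl, i, ?_, ?_⟩
        · rw [Finset.mem_sdiff]
          exact ⟨Finset.mem_univ i, hnotK i (Or.inl h2i)⟩
        · rw [hKcard]
          exact le_trans h2i (hmono (istar ω) (J ω + 1) h1i hcase (by omega))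
      · push_neg at hcase
        have hM := hIcond' (J ω + 1) (by omega) (by omega)
        rw [hMsplit] at hM
        have hN := hNle hJlt
        have hT : 0 < (Finset.univ.filter (fun k : Fin n => P k ω ≤ crit (J ω + 1))).card := by
          omega
        obtain ⟨i', hi'⟩ := Finset.card_pos.mp hT
        rw [Finset.mem_filter] at hi'
        refine ⟨K ω, rfl, i', ?_, ?_⟩
        · rw [Finset.mem_sdiff]
          exact ⟨Finset.mem_univ i', hnotK i' (Or.inr hi'.2)⟩
        · rw [hKcard]
          exact hi'.2
  · rintro ⟨S, hKS, i, hiS, hPi⟩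
    rw [Finset.mem_sdiff] at hiS
    have hScard : S.card = J ω := by rw [← hKS, hKcard]
    have hJlt : J ω < n := by
      by_contra h
      have hJn : J ω = n := by omega
      have : S = Finset.univ := Finset.eq_univ_of_card _ (by rw [hScard, hJn, Fintype.card_fin])
      rw [this] at hiS
      exact hiS.2 (Finset.mem_univ i)
    rw [hScard] at hPi
    have hcond : ∀ j ∈ Finset.Icc 1 (J ω + 1),
        j ≤ (Finset.univ.filter (fun k : Fin n ⊕ Fin n => pval k ω ≤ crit j)).card := by
      intro j hj
      rw [Finset.mem_Icc] at hj
      rw [hMsplit]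
      by_cases hje : j = J ω + 1
      · subst hje
        have hT : 0 < (Finset.univ.filter (fun k : Fin n => P k ω ≤ crit (J ω + 1))).card :=
          Finset.card_pos.mpr ⟨i, Finset.mem_filter.mpr ⟨Finset.mem_univ i, hPi⟩⟩
        rcases Nat.eq_zero_or_pos (J ω) with h0 | hpos'
        · omega
        · have h1 := hJcond' (J ω) hpos' le_rfl
          have h2 := hNmono (J ω) (J ω + 1) hpos' (by omega) (by omega)
          omega
      · have := hJcond' j hj.1 (by omega)
        omega
    have histge : J ω + 1 ≤ istar ω := hImax (J ω + 1) (by omega) hcond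
    exact ⟨i, by omega, le_trans hPi (hmono (J ω + 1) (istar ω) (by omega) histge hIle)⟩
end
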